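/- arXiv:0904.2872 — 3 statements merged into one kernel-verified Lean document; each statement's English description precedes it below -/
import Mathlib

section
/- Every nonempty factor U of the Tribonacci word t (the fixed point of the morphism τ: 0↦01, 1↦02, 2↦0) can be written in one of the forms τ(u), 0⁻¹τ(u), τ(u)0, or 0⁻¹τ(u)0 for some factor u of t. -/
/-- The Tribonacci morphism τ: 0↦01, 1↦02, 2↦0, extended to words. -/
def tau : List (Fin 3) → List (Fin 3) :=
  fun w => w.flatMap (fun a => if a = 0 then [0, 1] else if a = 1 then [0, 2] else [0])

/-- The Tribonacci word, the fixed point of τ starting with 0.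
Since τⁿ(0) is a prefix of τⁿ⁺¹(0) and |τ^(n+1)(0)| > n, this is well defined. -/
def trib : ℕ → Fin 3 := fun n => (tau^[n + 1] [0]).getD n 0

/-- `u` is a (finite, contiguous) factor of the Tribonacci word. -/
def IsFactor (u : List (Fin 3)) : Prop :=
  ∃ i : ℕ, u = (List.range u.length).map (fun j => trib (i + j))

/-! ### Auxiliary definitions -/

def T (k : ℕ) : List (Fin 3) := tau^[k] [0]

def fac (i n : ℕ) : List (Fin 3) := (List.range n).map (fun j => trib (i + j))

def blen (a : Fin 3) : ℕ := if a = 2 then 1 else 2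

def psi (m : ℕ) : ℕ := (tau (fac 0 m)).length

lemma tau_append (u v : List (Fin 3)) : tau (u ++ v) = tau u ++ tau v :=
  List.flatMap_append ..

lemma tau_prefix {u v : List (Fin 3)} (h : u <+: v) : tau u <+: tau v := by
  obtain ⟨w, rfl⟩ := h
  exact ⟨tau w, (tau_append u w).symm⟩

lemma tau_len_ge (w : List (Fin 3)) : w.length ≤ (tau w).length := by
  induction w with
  | nil => simp [tau]
  | cons a l ih =>
    have : tau (a :: l) = tau [a] ++ tau l := tau_append [a] l
    rw [this, List.length_append, List.length_cons]
    have ha : 1 ≤ (tau [a]).length := by fin_cases a <;> simp [tau]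
    omega

lemma T_succ (k : ℕ) : T (k + 1) = tau (T k) := Function.iterate_succ_apply' ..

lemma T_zero : T 0 = [0] := rfl

lemma T_prefix_succ (k : ℕ) : T k <+: T (k + 1) := by
  induction k with
  | zero => exact ⟨[1], rfl⟩
  | succ k ih => rw [T_succ, T_succ]; exact tau_prefix ih

lemma T_prefix {k m : ℕ} (h : k ≤ m) : T k <+: T m := by
  induction m with
  | zero => simp_all
  | succ m ih =>
    rcases Nat.lt_or_ge k (m + 1) with h' | h'
    · exact (ih (by omega)).trans (T_prefix_succ m)
    · have : k = m + 1 := by omega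
      subst this; rfl

lemma T_head (k : ℕ) : ∃ w, T k = 0 :: w := by
  obtain ⟨w, hw⟩ := T_prefix (Nat.zero_le k)
  exact ⟨w, by rw [← hw]; rfl⟩

lemma T_length (k : ℕ) : k + 1 ≤ (T k).length := by
  induction k with
  | zero => simp [T_zero]
  | succ k ih =>
    obtain ⟨w, hw⟩ := T_head k
    have := tau_len_ge w
    rw [T_succ, hw]
    have : tau (0 :: w) = [0, 1] ++ tau w := tau_append [0] w
    rw [this]
    simp only [List.length_append]
    have hlw : w.length + 1 = (T k).length := by rw [hw]; simp
    have := tau_len_ge w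
    simp only [List.length_cons]
    omega

lemma trib_eq {m n : ℕ} (h : n < (T m).length) : (T m).getD n 0 = trib n := by
  show (T m).getD n 0 = (T (n + 1)).getD n 0
  have hn1 : n < (T (n + 1)).length := by have := T_length (n + 1); omega
  rcases le_total m (n + 1) with hle | hle
  · have hp := T_prefix hle
    rw [List.getD_eq_getElem _ _ h, List.getD_eq_getElem _ _ hn1]
    exact hp.getElem h
  · have hp := T_prefix hle
    rw [List.getD_eq_getElem _ _ h, List.getD_eq_getElem _ _ hn1]
    exact (hp.getElem hn1).symm

@[simp] lemma fac_length (i n : ℕ) : (fac i n).length = n := by simp [fac]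

lemma fac_getElem (i n j : ℕ) (hj : j < n) :
    (fac i n)[j]'(by simpa using hj) = trib (i + j) := by
  simp [fac]

lemma fac0_eq_T (k : ℕ) : fac 0 ((T k).length) = T k := by
  apply List.ext_getElem (by simp)
  intro j h1 h2
  rw [fac_getElem 0 _ j (by simpa using h1)]
  have := trib_eq h2
  rw [List.getD_eq_getElem _ _ h2] at this
  simp [← this]

lemma fac_add (i a b : ℕ) : fac i (a + b) = fac i a ++ fac (i + a) b := by
  simp only [fac, List.range_add, List.map_append, List.map_map]
  congr 1
  apply List.map_congr_left
  intro j hj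
  simp [Function.comp]
  ring_nf

lemma fac_succ (i n : ℕ) : fac i (n + 1) = fac i n ++ [trib (i + n)] := by
  rw [fac_add i n 1]; rfl

lemma fac_cons (i n : ℕ) : fac i (n + 1) = trib i :: fac (i + 1) n := by
  have : fac i (1 + n) = fac i 1 ++ fac (i + 1) n := fac_add i 1 n
  rw [Nat.add_comm 1 n] at this
  rw [this]
  have h1 : fac i 1 = [trib i] := by simp [fac, List.range_succ]
  rw [h1]
  rfl

lemma fac0_prefix_T {m k : ℕ} (h : m ≤ (T k).length) : fac 0 m <+: T k := by
  rw [← fac0_eq_T k]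
  obtain ⟨b, hb⟩ : ∃ b, (T k).length = m + b := ⟨(T k).length - m, by omega⟩
  rw [hb, fac_add]
  exact ⟨_, rfl⟩

lemma prefix_T_eq_fac {u : List (Fin 3)} {k : ℕ} (h : u <+: T k) : u = fac 0 u.length := by
  have h1 : u = (T k).take u.length := List.prefix_iff_eq_take.mp h
  have hlen : u.length ≤ (T k).length := h.length_le
  have h2 : fac 0 u.length <+: T k := fac0_prefix_T hlen
  have h3 : fac 0 u.length = (T k).take (fac 0 u.length).length := List.prefix_iff_eq_take.mp h2
  rw [fac_length] at h3
  rw [h3]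
  exact h1

lemma tau_fac0 (m : ℕ) : tau (fac 0 m) = fac 0 (psi m) := by
  have h1 : fac 0 m <+: T m := fac0_prefix_T (by have := T_length m; omega)
  have h2 : tau (fac 0 m) <+: T (m + 1) := by rw [T_succ]; exact tau_prefix h1
  have := prefix_T_eq_fac h2
  rwa [show (tau (fac 0 m)).length = psi m from rfl] at this

lemma tau_single_len (a : Fin 3) : (tau [a]).length = blen a := by
  fin_cases a <;> simp [tau, blen]

lemma psi_zero : psi 0 = 0 := rfl

lemma psi_succ (m : ℕ) : psi (m + 1) = psi m + blen (trib m) := by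
  show (tau (fac 0 (m + 1))).length = _
  rw [fac_succ, tau_append, List.length_append]
  congr 1
  simpa using tau_single_len (trib m)

lemma blen_pos (a : Fin 3) : 1 ≤ blen a := by fin_cases a <;> simp [blen]

lemma blen_le (a : Fin 3) : blen a ≤ 2 := by fin_cases a <;> simp [blen]

lemma psi_mono : StrictMono psi := by
  apply strictMono_nat_of_lt_succ
  intro m
  have := blen_pos (trib m)
  rw [psi_succ]; omega

lemma tau_single (m : ℕ) : tau [trib m] = fac (psi m) (blen (trib m)) := by
  have h1 : fac 0 (psi (m + 1)) = fac 0 (psi m) ++ tau [trib m] := by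
    rw [← tau_fac0, ← tau_fac0, fac_succ, tau_append]
    simp
  have h2 : fac 0 (psi (m + 1)) = fac 0 (psi m) ++ fac (psi m) (blen (trib m)) := by
    rw [psi_succ, fac_add]
    simp
  exact List.append_cancel_left (h1.symm.trans h2)

lemma trib_psi (m : ℕ) : trib (psi m) = 0 := by
  have h := tau_single m
  have hb : ∃ w, tau [trib m] = (0 : Fin 3) :: w := by
    rcases Fin.exists_fin_two with _
    generalize trib m = a
    fin_cases a
    · exact ⟨[1], rfl⟩
    · exact ⟨[2], rfl⟩
    · exact ⟨[], rfl⟩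
  obtain ⟨w, hw⟩ := hb
  obtain ⟨b, hb⟩ : ∃ b, blen (trib m) = b + 1 := ⟨blen (trib m) - 1, by have := blen_pos (trib m); omega⟩
  rw [hw, hb, fac_cons] at h
  exact (List.cons.injEq .. ▸ h).1.symm

lemma tau_fac (p k : ℕ) : tau (fac p k) = fac (psi p) (psi (p + k) - psi p) := by
  induction k with
  | zero => simp [fac, tau]
  | succ k ih =>
    rw [fac_succ, tau_append, ih, tau_single]
    have h1 : psi p ≤ psi (p + k) := psi_mono.le_iff_le.mpr (by omega)
    have h2 : psi (p + (k + 1)) = psi (p + k) + blen (trib (p + k)) := by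
      rw [show p + (k + 1) = (p + k) + 1 by ring, psi_succ]
    rw [show psi (p + (k+1)) - psi p = (psi (p + k) - psi p) + blen (trib (p + k)) by omega,
      fac_add, show psi p + (psi (p + k) - psi p) = psi (p + k) by omega]

lemma exists_block (i : ℕ) : ∃ m, psi m ≤ i ∧ i < psi (m + 1) := by
  induction i with
  | zero =>
    refine ⟨0, le_refl _, ?_⟩
    have := psi_mono (show 0 < 1 by omega)
    rw [psi_zero] at this; exact this
  | succ i ih =>
    obtain ⟨m, h1, h2⟩ := ih
    rcases Nat.lt_or_ge (i + 1) (psi (m + 1)) with h | h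
    · exact ⟨m, by omega, h⟩
    · refine ⟨m + 1, h, ?_⟩
      have := psi_mono (show m + 1 < m + 1 + 1 by omega)
      omega

lemma fac_isFactor (p k : ℕ) : IsFactor (fac p k) := ⟨p, by rw [fac_length]; rfl⟩

theorem tribonacci_factor_desubstitution :
    ∀ U : List (Fin 3), IsFactor U → U ≠ [] →
      ∃ u : List (Fin 3), IsFactor u ∧
        (U = tau u ∨ (0 : Fin 3) :: U = tau u ∨ U = tau u ++ [0] ∨
          (0 : Fin 3) :: U = tau u ++ [0]) := by
  intro U hU hne
  obtain ⟨i, hUeq⟩ := hU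
  set n := U.length with hn
  have hU' : U = fac i n := hUeq
  have hn1 : 1 ≤ n := by
    rcases U with _ | ⟨a, l⟩
    · exact absurd rfl hne
    · simp [hn]
  obtain ⟨p, hp1, hp2⟩ := exists_block i
  obtain ⟨q, hq1, hq2⟩ := exists_block (i + n - 1)
  have hpq : p ≤ q := by
    have : psi p < psi (q + 1) := by omega
    have := psi_mono.lt_iff_lt.mp this
    omega
  have hpp : psi (p + 1) ≤ psi p + 2 := by
    rw [psi_succ]; have := blen_le (trib p); omega
  have hqq : psi (q + 1) ≤ psi q + 2 := by
    rw [psi_succ]; have := blen_le (trib q); omega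
  have hi2 : i = psi p ∨ i = psi p + 1 := by omega
  by_cases hA : i + n = psi (q + 1)
  · -- ends flush with a block
    refine ⟨fac p (q + 1 - p), fac_isFactor p (q + 1 - p), ?_⟩
    have htu : tau (fac p (q + 1 - p)) = fac (psi p) (psi (q + 1) - psi p) := by
      rw [tau_fac, show p + (q + 1 - p) = q + 1 by omega]
    rcases hi2 with hi | hi
    · left
      rw [hU', htu, ← hi, show psi (q+1) - i = n by omega]
    · right; left
      rw [hU', htu, show psi (q + 1) - psi p = n + 1 by omega, fac_cons, ← hi, trib_psi]
  · -- ends one past a block start: i + n = psi q + 1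
    have hB : i + n = psi q + 1 := by omega
    refine ⟨fac p (q - p), fac_isFactor p (q - p), ?_⟩
    have htu : tau (fac p (q - p)) = fac (psi p) (psi q - psi p) := by
      rw [tau_fac, show p + (q - p) = q by omega]
    have hext : tau (fac p (q - p)) ++ [(0 : Fin 3)] = fac (psi p) (psi q - psi p + 1) := by
      rw [htu, fac_succ, show psi p + (psi q - psi p) = psi q by omega, trib_psi]
    rcases hi2 with hi | hi
    · right; right; left
      rw [hU', hext, ← hi, show psi q - i + 1 = n by omega]
    · right; right; right
      rw [hU', hext, show psi q - psi p + 1 = n + 1 by omega, fac_cons, ← hi, trib_psi]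
end

section
/- The Tribonacci word t is 2-balanced: for all factors U and V of t with |U| = |V|, and every letter a ∈ {0,1,2}, one has | |U|ₐ - |V|ₐ | ≤ 2. -/
set_option maxHeartbeats 1000000

namespace TB
def A (k : ℕ) : List (Fin 3) := tau^[k] ([0] : List (Fin 3))
def Bw (k : ℕ) : List (Fin 3) := tau^[k] ([1] : List (Fin 3))
def Cw (k : ℕ) : List (Fin 3) := tau^[k] ([2] : List (Fin 3))
def Pref (n : ℕ) : List (Fin 3) := (List.range n).map trib

lemma tau_append (u v : List (Fin 3)) : tau (u ++ v) = tau u ++ tau v := by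
  simp [tau]

lemma iter_append (k : ℕ) (u v : List (Fin 3)) :
    tau^[k] (u ++ v) = tau^[k] u ++ tau^[k] v := by
  induction k generalizing u v with
  | zero => simp
  | succ k ih => simp [Function.iterate_succ_apply, tau_append, ih]

lemma A_succ (k : ℕ) : A (k+1) = A k ++ Bw k := by
  have : tau ([0] : List (Fin 3)) = [0] ++ [1] := by decide
  simp only [A, Bw, Function.iterate_succ_apply, this, iter_append]

lemma Bw_succ (k : ℕ) : Bw (k+1) = A k ++ Cw k := by
  have : tau ([1] : List (Fin 3)) = [0] ++ [2] := by decide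
  simp only [A, Bw, Cw, Function.iterate_succ_apply, this, iter_append]

lemma Cw_succ (k : ℕ) : Cw (k+1) = A k := by
  have : tau ([2] : List (Fin 3)) = [0] := by decide
  simp only [A, Cw, Function.iterate_succ_apply, this]

lemma A3 (k : ℕ) : A (k+3) = A (k+2) ++ A (k+1) ++ A k := by
  have h1 : A (k+3) = A (k+2) ++ Bw (k+2) := A_succ (k+2)
  rw [h1, Bw_succ, Cw_succ, List.append_assoc]


lemma A_ne (k : ℕ) : A k ≠ [] := by
  induction k with
  | zero => decide
  | succ k ih => rw [A_succ]; simp [ih]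

lemma Bw_ne (k : ℕ) : Bw k ≠ [] := by
  cases k with
  | zero => decide
  | succ k => rw [Bw_succ]; simp [A_ne]

lemma A_prefix_succ (k : ℕ) : A k <+: A (k+1) := ⟨Bw k, (A_succ k).symm⟩

lemma A_prefix (k m : ℕ) (h : k ≤ m) : A k <+: A m := by
  induction m with
  | zero => simpa [Nat.le_zero.mp h]
  | succ m ih =>
    rcases Nat.lt_or_ge k (m+1) with h' | h'
    · exact (ih (Nat.lt_succ_iff.mp h')).trans (A_prefix_succ m)
    · have : k = m+1 := le_antisymm h h'
      subst this; exact List.prefix_refl _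

lemma lenA_lt (k : ℕ) : (A k).length < (A (k+1)).length := by
  rw [A_succ, List.length_append]
  have := Bw_ne k
  have : 0 < (Bw k).length := List.length_pos_iff.mpr this
  omega

lemma lenA_mono : StrictMono (fun k => (A k).length) :=
  strictMono_nat_of_lt_succ lenA_lt

lemma lenA_ge (k : ℕ) : k + 1 ≤ (A k).length := by
  induction k with
  | zero => decide
  | succ k ih => have := lenA_lt k; omega

lemma trib_eq (n k : ℕ) (h : n < (A k).length) : (A k).getD n 0 = trib n := by
  have key : ∀ a b : ℕ, a ≤ b → ∀ m, m < (A a).length → (A a).getD m 0 = (A b).getD m 0 := by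
    intro a b hab m hm
    rcases A_prefix a b hab with ⟨s, hs⟩
    rw [← hs, List.getD_append _ _ _ _ hm]
  have h1 : trib n = (A (n+1)).getD n 0 := rfl
  rcases Nat.le_total k (n+1) with h' | h'
  · rw [key k (n+1) h' n h, h1]
  · rw [h1, key (n+1) k h' n (by have := lenA_ge (n+1); omega)]

lemma Pref_length (n : ℕ) : (Pref n).length = n := by simp [Pref]

lemma Pref_take (k m : ℕ) (h : m ≤ (A k).length) : Pref m = (A k).take m := by
  apply List.ext_getElem
  · simp [Pref_length, h]
  · intro n h1 h2
    simp only [Pref, List.getElem_map, List.getElem_range, List.getElem_take]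
    have hn : n < m := by simpa [Pref_length] using h1
    have := trib_eq n k (lt_of_lt_of_le hn h)
    rw [List.getD_eq_getElem _ _ (lt_of_lt_of_le hn h)] at this
    exact this.symm


lemma prefix_take {l₁ l₂ : List (Fin 3)} (h : l₁ <+: l₂) (m : ℕ) (hm : m ≤ l₁.length) :
    l₁.take m = l₂.take m := by
  obtain ⟨s, rfl⟩ := h
  rw [List.take_append, Nat.sub_eq_zero_of_le hm, List.take_zero,
    List.append_nil]

lemma lenC_le_lenB (k : ℕ) : (Cw k).length ≤ (Bw k).length := by
  cases k with
  | zero => decide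
  | succ k => rw [Cw_succ, Bw_succ, List.length_append]; omega

lemma lenB_le_lenA (k : ℕ) : (Bw k).length ≤ (A k).length := by
  cases k with
  | zero => decide
  | succ k =>
    rw [Bw_succ, A_succ, List.length_append, List.length_append]
    have := lenC_le_lenB k; omega

lemma Bw_take (k m : ℕ) (h : m < (Bw k).length) : (Bw k).take m = Pref m := by
  match k with
  | 0 =>
    have h1 : (Bw 0).length = 1 := by decide
    rw [h1] at h
    interval_cases m
    rfl
  | 1 =>
    have h1 : (Bw 1).length = 2 := by decide
    rw [h1] at h
    interval_cases m
    · rfl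
    · decide
  | (k+2) =>
    have hB : Bw (k+2) = A (k+1) ++ A k := by rw [Bw_succ, Cw_succ]
    have hpre : Bw (k+2) <+: A (k+2) := by
      rw [hB]
      refine ⟨Cw k, ?_⟩
      rw [List.append_assoc, ← Bw_succ, ← A_succ]
    have h2 : m ≤ (A (k+2)).length := le_trans (le_of_lt h) (List.IsPrefix.length_le hpre)
    rw [prefix_take hpre m (le_of_lt h), ← Pref_take (k+2) m h2]

lemma Pref_step (k n : ℕ) (h1 : (A k).length ≤ n) (h2 : n < (A (k+1)).length) :
    Pref n = A k ++ Pref (n - (A k).length) := by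
  have hn : n ≤ (A (k+1)).length := le_of_lt h2
  rw [Pref_take (k+1) n hn, A_succ, List.take_append,
    List.take_of_length_le h1, Bw_take]
  rw [A_succ, List.length_append] at h2
  omega

lemma decomp (n : ℕ) : ∃ L : List ℕ, L.Pairwise (· > ·) ∧ (∀ j ∈ L, (A j).length ≤ n) ∧
    Pref n = (L.map A).flatten := by
  induction n using Nat.strong_induction_on with
  | _ n ih =>
    rcases Nat.eq_zero_or_pos n with rfl | hn
    · exact ⟨[], by simp, by simp, by simp [Pref]⟩
    · have hA0 : (A 0).length ≤ n := by
        have : (A 0).length = 1 := rfl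
        omega
      set k := Nat.findGreatest (fun k => (A k).length ≤ n) n with hkdef
      have hP : (A k).length ≤ n := Nat.findGreatest_spec (P := fun j => (A j).length ≤ n) (m := 0) (Nat.zero_le n) hA0
      have hup : n < (A (k+1)).length := by
        rcases le_or_gt (k+1) n with h' | h'
        · by_contra hcon
          push_neg at hcon
          exact Nat.findGreatest_is_greatest (Nat.lt_succ_self k) h' hcon
        · have := lenA_ge (k+1); omega
      have h1A : 1 ≤ (A k).length := by have := lenA_ge k; omega
      set m := n - (A k).length with hmdef
      have hstep := Pref_step k n hP hup
      have hmlt : m < n := by omega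
      obtain ⟨L, hpw, hle, hflat⟩ := ih m hmlt
      have hmB : m < (Bw k).length := by
        rw [A_succ, List.length_append] at hup; omega
      have hmA : m < (A k).length := lt_of_lt_of_le hmB (lenB_le_lenA k)
      have hjk : ∀ j ∈ L, j < k := by
        intro j hj
        have h2 : (A j).length < (A k).length := lt_of_le_of_lt (hle j hj) hmA
        exact lenA_mono.lt_iff_lt.mp h2
      refine ⟨k :: L, ?_, ?_, ?_⟩
      · rw [List.pairwise_cons]
        exact ⟨hjk, hpw⟩
      · intro j hj
        rcases List.mem_cons.mp hj with rfl | hj'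
        · exact hP
        · exact le_trans (hle j hj') (le_of_lt hmlt)
      · simp only [List.map_cons, List.flatten_cons, ← hflat, hstep, ← hmdef]

lemma exists_beta : ∃ β : ℝ, β^3 = β^2 + β + 1 ∧ (1.839 ≤ β ∧ β ≤ 1.8393) ∧
    (1.8392867552141611 ≤ β ∧ β ≤ 1.8392867552141612) := by
  have hcont : ContinuousOn (fun x : ℝ => x^3 - x^2 - x - 1)
      (Set.Icc (1.8392867552141611 : ℝ) 1.8392867552141612) := by fun_prop
  have hab : (1.8392867552141611 : ℝ) ≤ 1.8392867552141612 := by norm_num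
  have hsub := intermediate_value_Icc hab hcont
  have h0 : (0:ℝ) ∈ Set.Icc ((fun x : ℝ => x^3 - x^2 - x - 1) 1.8392867552141611)
      ((fun x : ℝ => x^3 - x^2 - x - 1) 1.8392867552141612) := by
    constructor <;> norm_num
  obtain ⟨β, hβmem, hβ0⟩ := hsub h0
  have hβ0' : β^3 - β^2 - β - 1 = 0 := hβ0
  refine ⟨β, by linarith, ⟨by nlinarith [hβmem.1], by nlinarith [hβmem.2]⟩,
    hβmem.1, hβmem.2⟩

lemma engine (β : ℝ) (hb3 : β^3 = β^2 + β + 1) (hb1 : (1.839:ℝ) ≤ β) (hb2 : β ≤ 1.8393)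
    (d : ℕ → ℝ)
    (hrec : ∀ k, d k + (β^2 - β) * d (k+1) + β * d (k+2) = 0)
    (u l : ℕ → ℝ) (hu : ∀ j, j < 20 → d j ≤ u j ∧ 0 ≤ u j ∧ l j ≤ d j ∧ l j ≤ 0)
    (C : ℝ) (hC0 : 0 ≤ C) (h20 : |d 20| ≤ C) (h21 : |d 21| ≤ C) :
    ∀ F : Finset ℕ, (∑ j ∈ F, d j ≤ (∑ j ∈ Finset.range 20, u j) + 9*C ∧
                  (∑ j ∈ Finset.range 20, l j) - 9*C ≤ ∑ j ∈ F, d j) := by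
  have hbpos : (0:ℝ) < β := by linarith
  -- exact linear identities
  have e2 : ∀ k, β * d (k+2) = - d k - (β^2 - β) * d (k+1) := by
    intro k; linarith [hrec k]
  have e3 : ∀ k, β^2 * d (k+3) = (β^2 - β) * d k + (β^2 - β - 1) * d (k+1) := by
    intro k
    linear_combination β * hrec (k+1) - (β^2 - β) * hrec k + (β - 1) * d (k+1) * hb3
  have e4 : ∀ k, β^3 * d (k+4) = -(β^2 - β - 1) * d k + 2 * d (k+1) := by
    intro k
    linear_combination β^2 * hrec (k+2) - (β^3 - β^2) * hrec (k+1) + (β^2 - β - 1) * hrec k +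
      ((2 - β) * d (k+1) + (β^2 - β) * d (k+2)) * hb3
  have sqpos : (0:ℝ) < β^2 := by positivity
  have cupos : (0:ℝ) < β^3 := by positivity
  have hc1 : (0:ℝ) ≤ β^2 - β := by nlinarith
  have hc2 : (0:ℝ) ≤ β^2 - β - 1 := by nlinarith
  have hprod : (0:ℝ) ≤ (β - 1.839) * (1.8393 - β) :=
    mul_nonneg (by linarith) (by linarith)
  have habs2 : ∀ k M, |d k| ≤ M → |d (k+1)| ≤ M → |d (k+2)| ≤ 1.39*M := by
    intro k M h0 h1
    have hM : 0 ≤ M := le_trans (abs_nonneg _) h0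
    obtain ⟨ha0, hb0⟩ := abs_le.mp h0
    obtain ⟨ha1, hb1'⟩ := abs_le.mp h1
    have he := e2 k
    have p1 : (β^2-β) * d (k+1) ≤ (β^2-β)*M := mul_le_mul_of_nonneg_left hb1' hc1
    have p2 : (β^2-β) * (-M) ≤ (β^2-β) * d (k+1) := mul_le_mul_of_nonneg_left ha1 hc1
    have hkey : 1 + β^2 - β ≤ 1.39 * β := by nlinarith [hprod]
    have hkeyM : (1 + β^2 - β)*M ≤ 1.39*β*M := mul_le_mul_of_nonneg_right hkey hM
    rw [abs_le]
    constructor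
    · have h2 : β * (-(1.39*M)) ≤ β * d (k+2) := by linarith [he, p1, hkeyM]
      have := le_of_mul_le_mul_left h2 hbpos
      linarith
    · have h2 : β * d (k+2) ≤ β * (1.39*M) := by linarith [he, p2, hkeyM]
      exact le_of_mul_le_mul_left h2 hbpos
  have habs3 : ∀ k M, |d k| ≤ M → |d (k+1)| ≤ M → |d (k+3)| ≤ 0.62*M := by
    intro k M h0 h1
    have hM : 0 ≤ M := le_trans (abs_nonneg _) h0
    obtain ⟨ha0, hb0⟩ := abs_le.mp h0
    obtain ⟨ha1, hb1'⟩ := abs_le.mp h1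
    have he := e3 k
    have p1 : (β^2-β) * d k ≤ (β^2-β)*M := mul_le_mul_of_nonneg_left hb0 hc1
    have p1' : (β^2-β) * (-M) ≤ (β^2-β) * d k := mul_le_mul_of_nonneg_left ha0 hc1
    have p2 : (β^2-β-1) * d (k+1) ≤ (β^2-β-1)*M := mul_le_mul_of_nonneg_left hb1' hc2
    have p2' : (β^2-β-1) * (-M) ≤ (β^2-β-1) * d (k+1) := mul_le_mul_of_nonneg_left ha1 hc2
    have hkey : 2*β^2 - 2*β - 1 ≤ 0.62 * β^2 := by nlinarith [hprod]
    have hkeyM : (2*β^2 - 2*β - 1)*M ≤ 0.62*β^2*M := mul_le_mul_of_nonneg_right hkey hM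
    rw [abs_le]
    constructor
    · have h2 : β^2 * (-(0.62*M)) ≤ β^2 * d (k+3) := by linarith [he, p1, p2, hkeyM]
      have := le_of_mul_le_mul_left h2 sqpos
      linarith
    · have h2 : β^2 * d (k+3) ≤ β^2 * (0.62*M) := by linarith [he, p1', p2', hkeyM]
      exact le_of_mul_le_mul_left h2 sqpos
  have habs4 : ∀ k M, |d k| ≤ M → |d (k+1)| ≤ M → |d (k+4)| ≤ 0.62*M := by
    intro k M h0 h1
    have hM : 0 ≤ M := le_trans (abs_nonneg _) h0
    obtain ⟨ha0, hb0⟩ := abs_le.mp h0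
    obtain ⟨ha1, hb1'⟩ := abs_le.mp h1
    have he := e4 k
    have p1 : (β^2-β-1) * d k ≤ (β^2-β-1)*M := mul_le_mul_of_nonneg_left hb0 hc2
    have p1' : (β^2-β-1) * (-M) ≤ (β^2-β-1) * d k := mul_le_mul_of_nonneg_left ha0 hc2
    have hkey : β^2 - β + 1 ≤ 0.41 * β^3 := by nlinarith [hprod, hb3]
    have hkeyM : (β^2 - β + 1)*M ≤ 0.41*β^3*M := mul_le_mul_of_nonneg_right hkey hM
    rw [abs_le]
    constructor
    · have h2 : β^3 * (-(0.62*M)) ≤ β^3 * d (k+4) := by linarith [he, p1', hkeyM]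
      have := le_of_mul_le_mul_left h2 cupos
      linarith
    · have h2 : β^3 * d (k+4) ≤ β^3 * (0.62*M) := by linarith [he, p1, hkeyM]
      exact le_of_mul_le_mul_left h2 cupos
  -- the running maximum
  set N : ℕ → ℝ := fun q => max |d (20+3*q)| |d (21+3*q)| with hN
  have hN0 : ∀ q, 0 ≤ N q := fun q => le_trans (abs_nonneg _) (le_max_left _ _)
  have hNstep : ∀ q, N (q+1) ≤ 0.62 * N q := by
    intro q
    have h1 : |d (20+3*q)| ≤ N q := le_max_left _ _
    have h2 : |d (21+3*q)| ≤ N q := le_max_right _ _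
    have e1 : 20+3*(q+1) = (20+3*q)+3 := by ring
    have e2' : 21+3*(q+1) = (20+3*q)+4 := by ring
    have h3 : |d ((20+3*q)+3)| ≤ 0.62 * N q := habs3 _ _ h1 (by
      have : 20+3*q+1 = 21+3*q := by ring
      rw [this]; exact h2)
    have h4 : |d ((20+3*q)+4)| ≤ 0.62 * N q := habs4 _ _ h1 (by
      have : 20+3*q+1 = 21+3*q := by ring
      rw [this]; exact h2)
    rw [hN]
    simp only [e1, e2']
    exact max_le h3 h4
  have hNgeo : ∀ q, N q ≤ 0.62^q * C := by
    intro q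
    induction q with
    | zero => simpa [hN] using max_le h20 h21
    | succ q ih =>
      calc N (q+1) ≤ 0.62 * N q := hNstep q
      _ ≤ 0.62 * (0.62^q * C) := by nlinarith [hN0 q]
      _ = 0.62^(q+1) * C := by ring
  have hblock : ∀ q, |d (20+3*q)| + |d (21+3*q)| + |d (22+3*q)| ≤ 3.39 * (0.62^q * C) := by
    intro q
    have h1 : |d (20+3*q)| ≤ N q := le_max_left _ _
    have h2 : |d (21+3*q)| ≤ N q := le_max_right _ _
    have h3 : |d (22+3*q)| ≤ 1.39 * N q := by
      have := habs2 (20+3*q) (N q) h1 (by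
        have e : 20+3*q+1 = 21+3*q := by ring
        rw [e]; exact h2)
      have e : 20+3*q+2 = 22+3*q := by ring
      rwa [e] at this
    have hg := hNgeo q
    have hp : (0:ℝ) ≤ 0.62^q * C := by positivity
    nlinarith [hN0 q]
  have hIco : ∀ Q, ∑ j ∈ Finset.Ico 20 (20+3*Q), |d j| ≤ 9*C*(1 - 0.62^Q) := by
    intro Q
    induction Q with
    | zero => simp
    | succ Q ih =>
      have e1 : 20+3*(Q+1) = (22+3*Q) + 1 := by ring
      have e2' : 22+3*Q = (21+3*Q) + 1 := by ring
      have e3' : 21+3*Q = (20+3*Q) + 1 := by ring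
      have hle1 : 20 ≤ 20+3*Q := by omega
      rw [e1, Finset.sum_Ico_succ_top (by omega), e2', Finset.sum_Ico_succ_top (by omega),
        e3', Finset.sum_Ico_succ_top (by omega)]
      have hb := hblock Q
      have hpow : (0:ℝ) < 0.62^Q := by positivity
      have : 20 + 3*Q = (20+3*Q) := rfl
      rw [← e3', ← e2']
      have hsum : ∑ j ∈ Finset.Ico 20 (20+3*Q), |d j| ≤ 9*C*(1 - 0.62^Q) := ih
      have : (9:ℝ)*C*(1-0.62^Q) + 3.39*(0.62^Q*C) ≤ 9*C*(1 - 0.62^(Q+1)) := by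
        have : (0.62:ℝ)^(Q+1) = 0.62*0.62^Q := by ring
        rw [this]
        nlinarith [hpow, hC0]
      linarith
  have hIco' : ∀ Q, ∑ j ∈ Finset.Ico 20 (20+3*Q), |d j| ≤ 9*C := by
    intro Q
    have := hIco Q
    have hpow : (0:ℝ) ≤ 0.62^Q := by positivity
    have h9 : (0:ℝ) ≤ 9*C := by positivity
    nlinarith
  -- main bound
  intro F
  classical
  set Q := F.sup id + 1 with hQ
  have hFsub : ∀ j ∈ F, j < 20 + 3*Q := by
    intro j hj
    have : j ≤ F.sup id := Finset.le_sup (f := id) hj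
    omega
  have hsplit : ∑ j ∈ F, d j = ∑ j ∈ F.filter (fun j => j < 20), d j +
      ∑ j ∈ F.filter (fun j => ¬ j < 20), d j :=
    (Finset.sum_filter_add_sum_filter_not F _ d).symm
  have hlow_le : ∑ j ∈ F.filter (fun j => j < 20), d j ≤ ∑ j ∈ Finset.range 20, u j := by
    calc ∑ j ∈ F.filter (fun j => j < 20), d j
        ≤ ∑ j ∈ F.filter (fun j => j < 20), u j := by
          apply Finset.sum_le_sum
          intro j hj
          exact (hu j (Finset.mem_filter.mp hj).2).1
      _ ≤ ∑ j ∈ Finset.range 20, u j := by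
          apply Finset.sum_le_sum_of_subset_of_nonneg
          · intro j hj
            exact Finset.mem_range.mpr (Finset.mem_filter.mp hj).2
          · intro j hj _
            exact (hu j (Finset.mem_range.mp hj)).2.1
  have hlow_ge : ∑ j ∈ Finset.range 20, l j ≤ ∑ j ∈ F.filter (fun j => j < 20), d j := by
    have hsub2 : F.filter (fun j => j < 20) ⊆ Finset.range 20 := by
      intro j hj; exact Finset.mem_range.mpr (Finset.mem_filter.mp hj).2
    have hneg : ∑ j ∈ F.filter (fun j => j < 20), (-(l j)) ≤
        ∑ j ∈ Finset.range 20, (-(l j)) := by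
      apply Finset.sum_le_sum_of_subset_of_nonneg hsub2
      intro j hj _
      have := (hu j (Finset.mem_range.mp hj)).2.2.2
      linarith
    have e1 : ∑ j ∈ F.filter (fun j => j < 20), (-(l j)) =
        -∑ j ∈ F.filter (fun j => j < 20), l j := by simp
    have e2 : ∑ j ∈ Finset.range 20, (-(l j)) = -∑ j ∈ Finset.range 20, l j := by simp
    rw [e1, e2] at hneg
    have h1 : ∑ j ∈ Finset.range 20, l j ≤ ∑ j ∈ F.filter (fun j => j < 20), l j := by
      linarith
    refine le_trans h1 (Finset.sum_le_sum ?_)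
    intro j hj
    exact (hu j (Finset.mem_filter.mp hj).2).2.2.1
  have habs_high : ∀ (s : ℝ), s = ∑ j ∈ F.filter (fun j => ¬ j < 20), d j →
      |s| ≤ 9*C := by
    intro s hs
    have h1 : |s| ≤ ∑ j ∈ F.filter (fun j => ¬ j < 20), |d j| := by
      rw [hs]; exact Finset.abs_sum_le_sum_abs _ _
    have h2 : ∑ j ∈ F.filter (fun j => ¬ j < 20), |d j| ≤
        ∑ j ∈ Finset.Ico 20 (20+3*Q), |d j| := by
      apply Finset.sum_le_sum_of_subset_of_nonneg
      · intro j hj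
        obtain ⟨hjF, hj20⟩ := Finset.mem_filter.mp hj
        exact Finset.mem_Ico.mpr ⟨by omega, hFsub j hjF⟩
      · intro j _ _; exact abs_nonneg _
    exact le_trans h1 (le_trans h2 (hIco' Q))
  obtain ⟨hh1, hh2⟩ := abs_le.mp (habs_high _ rfl)
  constructor
  · rw [hsplit]; linarith
  · rw [hsplit]; linarith

-- value lemmas
lemma lenA_rec (k : ℕ) : (A (k+3)).length = (A (k+2)).length + (A (k+1)).length + (A k).length := by
  rw [A3]; simp [List.length_append]; omega

lemma cntA_rec (a : Fin 3) (k : ℕ) : (A (k+3)).count a = (A (k+2)).count a + (A (k+1)).count a + (A k).count a := by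
  rw [A3]; simp [List.count_append]; omega

lemma TL0 : (A 0).length = 1 := by decide
lemma TL1 : (A 1).length = 2 := by decide
lemma TL2 : (A 2).length = 4 := by decide
lemma TL3 : (A 3).length = 7 := by
  have h := lenA_rec 0; norm_num at h; rw [h, TL2, TL1, TL0]
lemma TL4 : (A 4).length = 13 := by
  have h := lenA_rec 1; norm_num at h; rw [h, TL3, TL2, TL1]
lemma TL5 : (A 5).length = 24 := by
  have h := lenA_rec 2; norm_num at h; rw [h, TL4, TL3, TL2]
lemma TL6 : (A 6).length = 44 := by
  have h := lenA_rec 3; norm_num at h; rw [h, TL5, TL4, TL3]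
lemma TL7 : (A 7).length = 81 := by
  have h := lenA_rec 4; norm_num at h; rw [h, TL6, TL5, TL4]
lemma TL8 : (A 8).length = 149 := by
  have h := lenA_rec 5; norm_num at h; rw [h, TL7, TL6, TL5]
lemma TL9 : (A 9).length = 274 := by
  have h := lenA_rec 6; norm_num at h; rw [h, TL8, TL7, TL6]
lemma TL10 : (A 10).length = 504 := by
  have h := lenA_rec 7; norm_num at h; rw [h, TL9, TL8, TL7]
lemma TL11 : (A 11).length = 927 := by
  have h := lenA_rec 8; norm_num at h; rw [h, TL10, TL9, TL8]
lemma TL12 : (A 12).length = 1705 := by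
  have h := lenA_rec 9; norm_num at h; rw [h, TL11, TL10, TL9]
lemma TL13 : (A 13).length = 3136 := by
  have h := lenA_rec 10; norm_num at h; rw [h, TL12, TL11, TL10]
lemma TL14 : (A 14).length = 5768 := by
  have h := lenA_rec 11; norm_num at h; rw [h, TL13, TL12, TL11]
lemma TL15 : (A 15).length = 10609 := by
  have h := lenA_rec 12; norm_num at h; rw [h, TL14, TL13, TL12]
lemma TL16 : (A 16).length = 19513 := by
  have h := lenA_rec 13; norm_num at h; rw [h, TL15, TL14, TL13]
lemma TL17 : (A 17).length = 35890 := by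
  have h := lenA_rec 14; norm_num at h; rw [h, TL16, TL15, TL14]
lemma TL18 : (A 18).length = 66012 := by
  have h := lenA_rec 15; norm_num at h; rw [h, TL17, TL16, TL15]
lemma TL19 : (A 19).length = 121415 := by
  have h := lenA_rec 16; norm_num at h; rw [h, TL18, TL17, TL16]
lemma TL20 : (A 20).length = 223317 := by
  have h := lenA_rec 17; norm_num at h; rw [h, TL19, TL18, TL17]
lemma TL21 : (A 21).length = 410744 := by
  have h := lenA_rec 18; norm_num at h; rw [h, TL20, TL19, TL18]
lemma C0_0 : (A 0).count 0 = 1 := by decide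
lemma C0_1 : (A 1).count 0 = 1 := by decide
lemma C0_2 : (A 2).count 0 = 2 := by decide
lemma C0_3 : (A 3).count 0 = 4 := by
  have h := cntA_rec 0 0; norm_num at h; rw [h, C0_2, C0_1, C0_0]
lemma C0_4 : (A 4).count 0 = 7 := by
  have h := cntA_rec 0 1; norm_num at h; rw [h, C0_3, C0_2, C0_1]
lemma C0_5 : (A 5).count 0 = 13 := by
  have h := cntA_rec 0 2; norm_num at h; rw [h, C0_4, C0_3, C0_2]
lemma C0_6 : (A 6).count 0 = 24 := by
  have h := cntA_rec 0 3; norm_num at h; rw [h, C0_5, C0_4, C0_3]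
lemma C0_7 : (A 7).count 0 = 44 := by
  have h := cntA_rec 0 4; norm_num at h; rw [h, C0_6, C0_5, C0_4]
lemma C0_8 : (A 8).count 0 = 81 := by
  have h := cntA_rec 0 5; norm_num at h; rw [h, C0_7, C0_6, C0_5]
lemma C0_9 : (A 9).count 0 = 149 := by
  have h := cntA_rec 0 6; norm_num at h; rw [h, C0_8, C0_7, C0_6]
lemma C0_10 : (A 10).count 0 = 274 := by
  have h := cntA_rec 0 7; norm_num at h; rw [h, C0_9, C0_8, C0_7]
lemma C0_11 : (A 11).count 0 = 504 := by
  have h := cntA_rec 0 8; norm_num at h; rw [h, C0_10, C0_9, C0_8]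
lemma C0_12 : (A 12).count 0 = 927 := by
  have h := cntA_rec 0 9; norm_num at h; rw [h, C0_11, C0_10, C0_9]
lemma C0_13 : (A 13).count 0 = 1705 := by
  have h := cntA_rec 0 10; norm_num at h; rw [h, C0_12, C0_11, C0_10]
lemma C0_14 : (A 14).count 0 = 3136 := by
  have h := cntA_rec 0 11; norm_num at h; rw [h, C0_13, C0_12, C0_11]
lemma C0_15 : (A 15).count 0 = 5768 := by
  have h := cntA_rec 0 12; norm_num at h; rw [h, C0_14, C0_13, C0_12]
lemma C0_16 : (A 16).count 0 = 10609 := by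
  have h := cntA_rec 0 13; norm_num at h; rw [h, C0_15, C0_14, C0_13]
lemma C0_17 : (A 17).count 0 = 19513 := by
  have h := cntA_rec 0 14; norm_num at h; rw [h, C0_16, C0_15, C0_14]
lemma C0_18 : (A 18).count 0 = 35890 := by
  have h := cntA_rec 0 15; norm_num at h; rw [h, C0_17, C0_16, C0_15]
lemma C0_19 : (A 19).count 0 = 66012 := by
  have h := cntA_rec 0 16; norm_num at h; rw [h, C0_18, C0_17, C0_16]
lemma C0_20 : (A 20).count 0 = 121415 := by
  have h := cntA_rec 0 17; norm_num at h; rw [h, C0_19, C0_18, C0_17]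
lemma C0_21 : (A 21).count 0 = 223317 := by
  have h := cntA_rec 0 18; norm_num at h; rw [h, C0_20, C0_19, C0_18]
lemma C1_0 : (A 0).count 1 = 0 := by decide
lemma C1_1 : (A 1).count 1 = 1 := by decide
lemma C1_2 : (A 2).count 1 = 1 := by decide
lemma C1_3 : (A 3).count 1 = 2 := by
  have h := cntA_rec 1 0; norm_num at h; rw [h, C1_2, C1_1, C1_0]
lemma C1_4 : (A 4).count 1 = 4 := by
  have h := cntA_rec 1 1; norm_num at h; rw [h, C1_3, C1_2, C1_1]
lemma C1_5 : (A 5).count 1 = 7 := by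
  have h := cntA_rec 1 2; norm_num at h; rw [h, C1_4, C1_3, C1_2]
lemma C1_6 : (A 6).count 1 = 13 := by
  have h := cntA_rec 1 3; norm_num at h; rw [h, C1_5, C1_4, C1_3]
lemma C1_7 : (A 7).count 1 = 24 := by
  have h := cntA_rec 1 4; norm_num at h; rw [h, C1_6, C1_5, C1_4]
lemma C1_8 : (A 8).count 1 = 44 := by
  have h := cntA_rec 1 5; norm_num at h; rw [h, C1_7, C1_6, C1_5]
lemma C1_9 : (A 9).count 1 = 81 := by
  have h := cntA_rec 1 6; norm_num at h; rw [h, C1_8, C1_7, C1_6]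
lemma C1_10 : (A 10).count 1 = 149 := by
  have h := cntA_rec 1 7; norm_num at h; rw [h, C1_9, C1_8, C1_7]
lemma C1_11 : (A 11).count 1 = 274 := by
  have h := cntA_rec 1 8; norm_num at h; rw [h, C1_10, C1_9, C1_8]
lemma C1_12 : (A 12).count 1 = 504 := by
  have h := cntA_rec 1 9; norm_num at h; rw [h, C1_11, C1_10, C1_9]
lemma C1_13 : (A 13).count 1 = 927 := by
  have h := cntA_rec 1 10; norm_num at h; rw [h, C1_12, C1_11, C1_10]
lemma C1_14 : (A 14).count 1 = 1705 := by
  have h := cntA_rec 1 11; norm_num at h; rw [h, C1_13, C1_12, C1_11]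
lemma C1_15 : (A 15).count 1 = 3136 := by
  have h := cntA_rec 1 12; norm_num at h; rw [h, C1_14, C1_13, C1_12]
lemma C1_16 : (A 16).count 1 = 5768 := by
  have h := cntA_rec 1 13; norm_num at h; rw [h, C1_15, C1_14, C1_13]
lemma C1_17 : (A 17).count 1 = 10609 := by
  have h := cntA_rec 1 14; norm_num at h; rw [h, C1_16, C1_15, C1_14]
lemma C1_18 : (A 18).count 1 = 19513 := by
  have h := cntA_rec 1 15; norm_num at h; rw [h, C1_17, C1_16, C1_15]
lemma C1_19 : (A 19).count 1 = 35890 := by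
  have h := cntA_rec 1 16; norm_num at h; rw [h, C1_18, C1_17, C1_16]
lemma C1_20 : (A 20).count 1 = 66012 := by
  have h := cntA_rec 1 17; norm_num at h; rw [h, C1_19, C1_18, C1_17]
lemma C1_21 : (A 21).count 1 = 121415 := by
  have h := cntA_rec 1 18; norm_num at h; rw [h, C1_20, C1_19, C1_18]
lemma C2_0 : (A 0).count 2 = 0 := by decide
lemma C2_1 : (A 1).count 2 = 0 := by decide
lemma C2_2 : (A 2).count 2 = 1 := by decide
lemma C2_3 : (A 3).count 2 = 1 := by
  have h := cntA_rec 2 0; norm_num at h; rw [h, C2_2, C2_1, C2_0]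
lemma C2_4 : (A 4).count 2 = 2 := by
  have h := cntA_rec 2 1; norm_num at h; rw [h, C2_3, C2_2, C2_1]
lemma C2_5 : (A 5).count 2 = 4 := by
  have h := cntA_rec 2 2; norm_num at h; rw [h, C2_4, C2_3, C2_2]
lemma C2_6 : (A 6).count 2 = 7 := by
  have h := cntA_rec 2 3; norm_num at h; rw [h, C2_5, C2_4, C2_3]
lemma C2_7 : (A 7).count 2 = 13 := by
  have h := cntA_rec 2 4; norm_num at h; rw [h, C2_6, C2_5, C2_4]
lemma C2_8 : (A 8).count 2 = 24 := by
  have h := cntA_rec 2 5; norm_num at h; rw [h, C2_7, C2_6, C2_5]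
lemma C2_9 : (A 9).count 2 = 44 := by
  have h := cntA_rec 2 6; norm_num at h; rw [h, C2_8, C2_7, C2_6]
lemma C2_10 : (A 10).count 2 = 81 := by
  have h := cntA_rec 2 7; norm_num at h; rw [h, C2_9, C2_8, C2_7]
lemma C2_11 : (A 11).count 2 = 149 := by
  have h := cntA_rec 2 8; norm_num at h; rw [h, C2_10, C2_9, C2_8]
lemma C2_12 : (A 12).count 2 = 274 := by
  have h := cntA_rec 2 9; norm_num at h; rw [h, C2_11, C2_10, C2_9]
lemma C2_13 : (A 13).count 2 = 504 := by
  have h := cntA_rec 2 10; norm_num at h; rw [h, C2_12, C2_11, C2_10]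
lemma C2_14 : (A 14).count 2 = 927 := by
  have h := cntA_rec 2 11; norm_num at h; rw [h, C2_13, C2_12, C2_11]
lemma C2_15 : (A 15).count 2 = 1705 := by
  have h := cntA_rec 2 12; norm_num at h; rw [h, C2_14, C2_13, C2_12]
lemma C2_16 : (A 16).count 2 = 3136 := by
  have h := cntA_rec 2 13; norm_num at h; rw [h, C2_15, C2_14, C2_13]
lemma C2_17 : (A 17).count 2 = 5768 := by
  have h := cntA_rec 2 14; norm_num at h; rw [h, C2_16, C2_15, C2_14]
lemma C2_18 : (A 18).count 2 = 10609 := by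
  have h := cntA_rec 2 15; norm_num at h; rw [h, C2_17, C2_16, C2_15]
lemma C2_19 : (A 19).count 2 = 19513 := by
  have h := cntA_rec 2 16; norm_num at h; rw [h, C2_18, C2_17, C2_16]
lemma C2_20 : (A 20).count 2 = 35890 := by
  have h := cntA_rec 2 17; norm_num at h; rw [h, C2_19, C2_18, C2_17]
lemma C2_21 : (A 21).count 2 = 66012 := by
  have h := cntA_rec 2 18; norm_num at h; rw [h, C2_20, C2_19, C2_18]

lemma letter0 (β : ℝ) (hb3 : β^3 = β^2 + β + 1) (hb1 : (1.839:ℝ) ≤ β) (hb2 : β ≤ 1.8393)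
    (hd1 : (1.8392867552141611:ℝ) ≤ β) (hd2 : β ≤ 1.8392867552141612) :
    ∀ F : Finset ℕ,
      (∑ j ∈ F, ((((A j).count 0 : ℕ) : ℝ) - (β^2 - β - 1) * ((A j).length : ℝ))) ≤ 0.783427 ∧
      -(0.468510:ℝ) ≤ ∑ j ∈ F, ((((A j).count 0 : ℕ) : ℝ) - (β^2 - β - 1) * ((A j).length : ℝ)) := by
  have hprod : (0:ℝ) ≤ (β - 1.8392867552141611) * (1.8392867552141612 - β) :=
    mul_nonneg (by linarith) (by linarith)
  have hθlo : (0.543689012:ℝ) ≤ (β^2 - β - 1) := by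
    nlinarith [hprod, sq_nonneg (β - 1.8392867552141611), sq_nonneg (β - 1.8392867552141612)]
  have hθhi : (β^2 - β - 1) ≤ (0.543689013:ℝ) := by
    nlinarith [hprod, sq_nonneg (β - 1.8392867552141611), sq_nonneg (β - 1.8392867552141612)]
  have hadd : ∀ k, (((A (k+3)).count 0 : ℕ) : ℝ) - (β^2 - β - 1) * ((A (k+3)).length : ℝ) =
      ((((A (k+2)).count 0 : ℕ) : ℝ) - (β^2 - β - 1) * ((A (k+2)).length : ℝ)) +
      ((((A (k+1)).count 0 : ℕ) : ℝ) - (β^2 - β - 1) * ((A (k+1)).length : ℝ)) +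
      ((((A k).count 0 : ℕ) : ℝ) - (β^2 - β - 1) * ((A k).length : ℝ)) := by
    intro k
    have h1 := lenA_rec k
    have h2 := cntA_rec 0 k
    rw [h1, h2]
    push_cast
    ring
  have hrec : ∀ k, ((fun j => (((A j).count 0 : ℕ) : ℝ) - (β^2 - β - 1) * ((A j).length : ℝ)) k) + (β^2 - β) * ((fun j => (((A j).count 0 : ℕ) : ℝ) - (β^2 - β - 1) * ((A j).length : ℝ)) (k+1)) + β * ((fun j => (((A j).count 0 : ℕ) : ℝ) - (β^2 - β - 1) * ((A j).length : ℝ)) (k+2)) = 0 := by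
    intro k
    induction k with
    | zero =>
      simp only []
      rw [TL0, TL1, TL2, C0_0, C0_1, C0_2]
      push_cast
      linear_combination (-2*β - 2) * hb3
    | succ k ih =>
      simp only [] at ih ⊢
      have h3 := hadd k
      have e1 : k + 1 + 2 = k + 3 := by omega
      rw [e1, h3]
      linear_combination β * ih - ((((A (k+1)).count 0 : ℕ) : ℝ) - (β^2 - β - 1) * ((A (k+1)).length : ℝ)) * hb3
  have h20 : |(fun j => (((A j).count 0 : ℕ) : ℝ) - (β^2 - β - 1) * ((A j).length : ℝ)) 20| ≤ (0.000908:ℝ) := by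
    simp only []
    rw [TL20, C0_20, abs_le]
    constructor <;> push_cast <;> nlinarith [hθlo, hθhi]
  have h21 : |(fun j => (((A j).count 0 : ℕ) : ℝ) - (β^2 - β - 1) * ((A j).length : ℝ)) 21| ≤ (0.000908:ℝ) := by
    simp only []
    rw [TL21, C0_21, abs_le]
    constructor <;> push_cast <;> nlinarith [hθlo, hθhi]
  have hu : ∀ j, j < 20 → ((fun j => (((A j).count 0 : ℕ) : ℝ) - (β^2 - β - 1) * ((A j).length : ℝ)) j) ≤ (fun j => ([(0.456311:ℝ), (0.000000:ℝ), (0.000000:ℝ), (0.194177:ℝ), (0.000000:ℝ), (0.000000:ℝ), (0.077684:ℝ), (0.000000:ℝ), (0.000000:ℝ), (0.029211:ℝ), (0.000000:ℝ), (0.000286:ℝ), (0.010235:ℝ), (0.000000:ℝ), (0.001779:ℝ), (0.003272:ℝ), (0.000000:ℝ), (0.001360:ℝ), (0.000940:ℝ), (0.000000:ℝ)]).getD j 0) j ∧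
      0 ≤ (fun j => ([(0.456311:ℝ), (0.000000:ℝ), (0.000000:ℝ), (0.194177:ℝ), (0.000000:ℝ), (0.000000:ℝ), (0.077684:ℝ), (0.000000:ℝ), (0.000000:ℝ), (0.029211:ℝ), (0.000000:ℝ), (0.000286:ℝ), (0.010235:ℝ), (0.000000:ℝ), (0.001779:ℝ), (0.003272:ℝ), (0.000000:ℝ), (0.001360:ℝ), (0.000940:ℝ), (0.000000:ℝ)]).getD j 0) j ∧
      (fun j => ([(0.000000:ℝ), (-0.087379:ℝ), (-0.174757:ℝ), (0.000000:ℝ), (-0.067958:ℝ), (-0.048537:ℝ), (0.000000:ℝ), (-0.038811:ℝ), (-0.009663:ℝ), (0.000000:ℝ), (-0.019263:ℝ), (0.000000:ℝ), (0.000000:ℝ), (-0.008745:ℝ), (0.000000:ℝ), (0.000000:ℝ), (-0.003711:ℝ), (0.000000:ℝ), (0.000000:ℝ), (-0.001514:ℝ)]).getD j 0) j ≤ ((fun j => (((A j).count 0 : ℕ) : ℝ) - (β^2 - β - 1) * ((A j).length : ℝ)) j) ∧ (fun j => ([(0.000000:ℝ), (-0.087379:ℝ), (-0.174757:ℝ),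 (0.000000:ℝ), (-0.067958:ℝ), (-0.048537:ℝ), (0.000000:ℝ), (-0.038811:ℝ), (-0.009663:ℝ), (0.000000:ℝ), (-0.019263:ℝ), (0.000000:ℝ), (0.000000:ℝ), (-0.008745:ℝ), (0.000000:ℝ), (0.000000:ℝ), (-0.003711:ℝ), (0.000000:ℝ), (0.000000:ℝ), (-0.001514:ℝ)]).getD j 0) j ≤ 0 := by
    intro j hj
    interval_cases j
    · simp only []
      exact ⟨by rw [TL0, C0_0]; simp only [List.getD_cons_zero, List.getD_cons_succ]; push_cast; linarith, by norm_num [List.getD_cons_zero, List.getD_cons_succ], by rw [TL0, C0_0]; simp only [List.getD_cons_zero, List.getD_cons_succ]; push_cast; linarith, by norm_num [List.getD_cons_zero, List.getD_cons_succ]⟩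
    · simp only []
      exact ⟨by rw [TL1, C0_1]; simp only [List.getD_cons_zero, List.getD_cons_succ]; push_cast; linarith, by norm_num [List.getD_cons_zero, List.getD_cons_succ], by rw [TL1, C0_1]; simp only [List.getD_cons_zero, List.getD_cons_succ]; push_cast; linarith, by norm_num [List.getD_cons_zero, List.getD_cons_succ]⟩
    · simp only []
      exact ⟨by rw [TL2, C0_2]; simp only [List.getD_cons_zero, List.getD_cons_succ]; push_cast; linarith, by norm_num [List.getD_cons_zero, List.getD_cons_succ], by rw [TL2, C0_2]; simp only [List.getD_cons_zero, List.getD_cons_succ]; push_cast; linarith, by norm_num [List.getD_cons_zero, List.getD_cons_succ]⟩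
    · simp only []
      exact ⟨by rw [TL3, C0_3]; simp only [List.getD_cons_zero, List.getD_cons_succ]; push_cast; linarith, by norm_num [List.getD_cons_zero, List.getD_cons_succ], by rw [TL3, C0_3]; simp only [List.getD_cons_zero, List.getD_cons_succ]; push_cast; linarith, by norm_num [List.getD_cons_zero, List.getD_cons_succ]⟩
    · simp only []
      exact ⟨by rw [TL4, C0_4]; simp only [List.getD_cons_zero, List.getD_cons_succ]; push_cast; linarith, by norm_num [List.getD_cons_zero, List.getD_cons_succ], by rw [TL4, C0_4]; simp only [List.getD_cons_zero, List.getD_cons_succ]; push_cast; linarith, by norm_num [List.getD_cons_zero, List.getD_cons_succ]⟩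
    · simp only []
      exact ⟨by rw [TL5, C0_5]; simp only [List.getD_cons_zero, List.getD_cons_succ]; push_cast; linarith, by norm_num [List.getD_cons_zero, List.getD_cons_succ], by rw [TL5, C0_5]; simp only [List.getD_cons_zero, List.getD_cons_succ]; push_cast; linarith, by norm_num [List.getD_cons_zero, List.getD_cons_succ]⟩
    · simp only []
      exact ⟨by rw [TL6, C0_6]; simp only [List.getD_cons_zero, List.getD_cons_succ]; push_cast; linarith, by norm_num [List.getD_cons_zero, List.getD_cons_succ], by rw [TL6, C0_6]; simp only [List.getD_cons_zero, List.getD_cons_succ]; push_cast; linarith, by norm_num [List.getD_cons_zero, List.getD_cons_succ]⟩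
    · simp only []
      exact ⟨by rw [TL7, C0_7]; simp only [List.getD_cons_zero, List.getD_cons_succ]; push_cast; linarith, by norm_num [List.getD_cons_zero, List.getD_cons_succ], by rw [TL7, C0_7]; simp only [List.getD_cons_zero, List.getD_cons_succ]; push_cast; linarith, by norm_num [List.getD_cons_zero, List.getD_cons_succ]⟩
    · simp only []
      exact ⟨by rw [TL8, C0_8]; simp only [List.getD_cons_zero, List.getD_cons_succ]; push_cast; linarith, by norm_num [List.getD_cons_zero, List.getD_cons_succ], by rw [TL8, C0_8]; simp only [List.getD_cons_zero, List.getD_cons_succ]; push_cast; linarith, by norm_num [List.getD_cons_zero, List.getD_cons_succ]⟩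
    · simp only []
      exact ⟨by rw [TL9, C0_9]; simp only [List.getD_cons_zero, List.getD_cons_succ]; push_cast; linarith, by norm_num [List.getD_cons_zero, List.getD_cons_succ], by rw [TL9, C0_9]; simp only [List.getD_cons_zero, List.getD_cons_succ]; push_cast; linarith, by norm_num [List.getD_cons_zero, List.getD_cons_succ]⟩
    · simp only []
      exact ⟨by rw [TL10, C0_10]; simp only [List.getD_cons_zero, List.getD_cons_succ]; push_cast; linarith, by norm_num [List.getD_cons_zero, List.getD_cons_succ], by rw [TL10, C0_10]; simp only [List.getD_cons_zero, List.getD_cons_succ]; push_cast; linarith, by norm_num [List.getD_cons_zero, List.getD_cons_succ]⟩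
    · simp only []
      exact ⟨by rw [TL11, C0_11]; simp only [List.getD_cons_zero, List.getD_cons_succ]; push_cast; linarith, by norm_num [List.getD_cons_zero, List.getD_cons_succ], by rw [TL11, C0_11]; simp only [List.getD_cons_zero, List.getD_cons_succ]; push_cast; linarith, by norm_num [List.getD_cons_zero, List.getD_cons_succ]⟩
    · simp only []
      exact ⟨by rw [TL12, C0_12]; simp only [List.getD_cons_zero, List.getD_cons_succ]; push_cast; linarith, by norm_num [List.getD_cons_zero, List.getD_cons_succ], by rw [TL12, C0_12]; simp only [List.getD_cons_zero, List.getD_cons_succ]; push_cast; linarith, by norm_num [List.getD_cons_zero, List.getD_cons_succ]⟩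
    · simp only []
      exact ⟨by rw [TL13, C0_13]; simp only [List.getD_cons_zero, List.getD_cons_succ]; push_cast; linarith, by norm_num [List.getD_cons_zero, List.getD_cons_succ], by rw [TL13, C0_13]; simp only [List.getD_cons_zero, List.getD_cons_succ]; push_cast; linarith, by norm_num [List.getD_cons_zero, List.getD_cons_succ]⟩
    · simp only []
      exact ⟨by rw [TL14, C0_14]; simp only [List.getD_cons_zero, List.getD_cons_succ]; push_cast; linarith, by norm_num [List.getD_cons_zero, List.getD_cons_succ], by rw [TL14, C0_14]; simp only [List.getD_cons_zero, List.getD_cons_succ]; push_cast; linarith, by norm_num [List.getD_cons_zero, List.getD_cons_succ]⟩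
    · simp only []
      exact ⟨by rw [TL15, C0_15]; simp only [List.getD_cons_zero, List.getD_cons_succ]; push_cast; linarith, by norm_num [List.getD_cons_zero, List.getD_cons_succ], by rw [TL15, C0_15]; simp only [List.getD_cons_zero, List.getD_cons_succ]; push_cast; linarith, by norm_num [List.getD_cons_zero, List.getD_cons_succ]⟩
    · simp only []
      exact ⟨by rw [TL16, C0_16]; simp only [List.getD_cons_zero, List.getD_cons_succ]; push_cast; linarith, by norm_num [List.getD_cons_zero, List.getD_cons_succ], by rw [TL16, C0_16]; simp only [List.getD_cons_zero, List.getD_cons_succ]; push_cast; linarith, by norm_num [List.getD_cons_zero, List.getD_cons_succ]⟩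
    · simp only []
      exact ⟨by rw [TL17, C0_17]; simp only [List.getD_cons_zero, List.getD_cons_succ]; push_cast; linarith, by norm_num [List.getD_cons_zero, List.getD_cons_succ], by rw [TL17, C0_17]; simp only [List.getD_cons_zero, List.getD_cons_succ]; push_cast; linarith, by norm_num [List.getD_cons_zero, List.getD_cons_succ]⟩
    · simp only []
      exact ⟨by rw [TL18, C0_18]; simp only [List.getD_cons_zero, List.getD_cons_succ]; push_cast; linarith, by norm_num [List.getD_cons_zero, List.getD_cons_succ], by rw [TL18, C0_18]; simp only [List.getD_cons_zero, List.getD_cons_succ]; push_cast; linarith, by norm_num [List.getD_cons_zero, List.getD_cons_succ]⟩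
    · simp only []
      exact ⟨by rw [TL19, C0_19]; simp only [List.getD_cons_zero, List.getD_cons_succ]; push_cast; linarith, by norm_num [List.getD_cons_zero, List.getD_cons_succ], by rw [TL19, C0_19]; simp only [List.getD_cons_zero, List.getD_cons_succ]; push_cast; linarith, by norm_num [List.getD_cons_zero, List.getD_cons_succ]⟩
  have hE := engine β hb3 hb1 hb2 (fun j => (((A j).count 0 : ℕ) : ℝ) - (β^2 - β - 1) * ((A j).length : ℝ)) hrec
    (fun j => ([(0.456311:ℝ), (0.000000:ℝ), (0.000000:ℝ), (0.194177:ℝ), (0.000000:ℝ), (0.000000:ℝ), (0.077684:ℝ), (0.000000:ℝ), (0.000000:ℝ), (0.029211:ℝ), (0.000000:ℝ), (0.000286:ℝ), (0.010235:ℝ), (0.000000:ℝ), (0.001779:ℝ), (0.003272:ℝ), (0.000000:ℝ), (0.001360:ℝ), (0.000940:ℝ), (0.000000:ℝ)]).getD j 0) (fun j => ([(0.000000:ℝ), (-0.087379:ℝ), (-0.174757:ℝ), (0.000000:ℝ), (-0.067958:ℝ), (-0.048537:ℝ), (0.000000:ℝ), (-0.038811:ℝ), (-0.009663:ℝ), (0.000000:ℝ),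 (-0.019263:ℝ), (0.000000:ℝ), (0.000000:ℝ), (-0.008745:ℝ), (0.000000:ℝ), (0.000000:ℝ), (-0.003711:ℝ), (0.000000:ℝ), (0.000000:ℝ), (-0.001514:ℝ)]).getD j 0) hu (0.000908:ℝ) (by norm_num) h20 h21
  intro F
  obtain ⟨h1, h2⟩ := hE F
  have hsu : (∑ j ∈ Finset.range 20, (fun j => ([(0.456311:ℝ), (0.000000:ℝ), (0.000000:ℝ), (0.194177:ℝ), (0.000000:ℝ), (0.000000:ℝ), (0.077684:ℝ), (0.000000:ℝ), (0.000000:ℝ), (0.029211:ℝ), (0.000000:ℝ), (0.000286:ℝ), (0.010235:ℝ), (0.000000:ℝ), (0.001779:ℝ), (0.003272:ℝ), (0.000000:ℝ), (0.001360:ℝ), (0.000940:ℝ), (0.000000:ℝ)]).getD j 0) j) = (0.775255:ℝ) := by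
    simp only [Finset.sum_range_succ, Finset.sum_range_zero, List.getD_cons_zero, List.getD_cons_succ]
    norm_num
  have hsl : (∑ j ∈ Finset.range 20, (fun j => ([(0.000000:ℝ), (-0.087379:ℝ), (-0.174757:ℝ), (0.000000:ℝ), (-0.067958:ℝ), (-0.048537:ℝ), (0.000000:ℝ), (-0.038811:ℝ), (-0.009663:ℝ), (0.000000:ℝ), (-0.019263:ℝ), (0.000000:ℝ), (0.000000:ℝ), (-0.008745:ℝ), (0.000000:ℝ), (0.000000:ℝ), (-0.003711:ℝ), (0.000000:ℝ), (0.000000:ℝ), (-0.001514:ℝ)]).getD j 0) j) = -(0.460338:ℝ) := by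
    simp only [Finset.sum_range_succ, Finset.sum_range_zero, List.getD_cons_zero, List.getD_cons_succ]
    norm_num
  rw [hsu] at h1
  rw [hsl] at h2
  constructor
  · refine le_trans h1 ?_
    norm_num
  · refine le_trans ?_ h2
    norm_num

lemma letter1 (β : ℝ) (hb3 : β^3 = β^2 + β + 1) (hb1 : (1.839:ℝ) ≤ β) (hb2 : β ≤ 1.8393)
    (hd1 : (1.8392867552141611:ℝ) ≤ β) (hd2 : β ≤ 1.8392867552141612) :
    ∀ F : Finset ℕ,
      (∑ j ∈ F, ((((A j).count 1 : ℕ) : ℝ) - (2*β - β^2) * ((A j).length : ℝ))) ≤ 0.676303 ∧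
      -(0.732338:ℝ) ≤ ∑ j ∈ F, ((((A j).count 1 : ℕ) : ℝ) - (2*β - β^2) * ((A j).length : ℝ)) := by
  have hprod : (0:ℝ) ≤ (β - 1.8392867552141611) * (1.8392867552141612 - β) :=
    mul_nonneg (by linarith) (by linarith)
  have hθlo : (0.295597742:ℝ) ≤ (2*β - β^2) := by
    nlinarith [hprod, sq_nonneg (β - 1.8392867552141611), sq_nonneg (β - 1.8392867552141612)]
  have hθhi : (2*β - β^2) ≤ (0.295597743:ℝ) := by
    nlinarith [hprod, sq_nonneg (β - 1.8392867552141611), sq_nonneg (β - 1.8392867552141612)]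
  have hadd : ∀ k, (((A (k+3)).count 1 : ℕ) : ℝ) - (2*β - β^2) * ((A (k+3)).length : ℝ) =
      ((((A (k+2)).count 1 : ℕ) : ℝ) - (2*β - β^2) * ((A (k+2)).length : ℝ)) +
      ((((A (k+1)).count 1 : ℕ) : ℝ) - (2*β - β^2) * ((A (k+1)).length : ℝ)) +
      ((((A k).count 1 : ℕ) : ℝ) - (2*β - β^2) * ((A k).length : ℝ)) := by
    intro k
    have h1 := lenA_rec k
    have h2 := cntA_rec 1 k
    rw [h1, h2]
    push_cast
    ring
  have hrec : ∀ k, ((fun j => (((A j).count 1 : ℕ) : ℝ) - (2*β - β^2) * ((A j).length : ℝ)) k) + (β^2 - β) * ((fun j => (((A j).count 1 : ℕ) : ℝ) - (2*β - β^2) * ((A j).length : ℝ)) (k+1)) + β * ((fun j => (((A j).count 1 : ℕ) : ℝ) - (2*β - β^2) * ((A j).length : ℝ)) (k+2)) = 0 := by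
    intro k
    induction k with
    | zero =>
      simp only []
      rw [TL0, TL1, TL2, C1_0, C1_1, C1_2]
      push_cast
      linear_combination (2*β) * hb3
    | succ k ih =>
      simp only [] at ih ⊢
      have h3 := hadd k
      have e1 : k + 1 + 2 = k + 3 := by omega
      rw [e1, h3]
      linear_combination β * ih - ((((A (k+1)).count 1 : ℕ) : ℝ) - (2*β - β^2) * ((A (k+1)).length : ℝ)) * hb3
  have h20 : |(fun j => (((A j).count 1 : ℕ) : ℝ) - (2*β - β^2) * ((A j).length : ℝ)) 20| ≤ (0.001174:ℝ) := by
    simp only []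
    rw [TL20, C1_20, abs_le]
    constructor <;> push_cast <;> nlinarith [hθlo, hθhi]
  have h21 : |(fun j => (((A j).count 1 : ℕ) : ℝ) - (2*β - β^2) * ((A j).length : ℝ)) 21| ≤ (0.001174:ℝ) := by
    simp only []
    rw [TL21, C1_21, abs_le]
    constructor <;> push_cast <;> nlinarith [hθlo, hθhi]
  have hu : ∀ j, j < 20 → ((fun j => (((A j).count 1 : ℕ) : ℝ) - (2*β - β^2) * ((A j).length : ℝ)) j) ≤ (fun j => ([(0.000000:ℝ), (0.408805:ℝ), (0.000000:ℝ), (0.000000:ℝ), (0.157230:ℝ), (0.000000:ℝ), (0.000000:ℝ), (0.056583:ℝ), (0.000000:ℝ), (0.006219:ℝ), (0.018739:ℝ), (0.000000:ℝ), (0.005850:ℝ), (0.005482:ℝ), (0.000000:ℝ), (0.003556:ℝ), (0.001261:ℝ), (0.000000:ℝ), (0.001856:ℝ), (0.000156:ℝ)]).getD j 0) j ∧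
      0 ≤ (fun j => ([(0.000000:ℝ), (0.408805:ℝ), (0.000000:ℝ), (0.000000:ℝ), (0.157230:ℝ), (0.000000:ℝ), (0.000000:ℝ), (0.056583:ℝ), (0.000000:ℝ), (0.006219:ℝ), (0.018739:ℝ), (0.000000:ℝ), (0.005850:ℝ), (0.005482:ℝ), (0.000000:ℝ), (0.003556:ℝ), (0.001261:ℝ), (0.000000:ℝ), (0.001856:ℝ), (0.000156:ℝ)]).getD j 0) j ∧
      (fun j => ([(-0.295598:ℝ), (0.000000:ℝ), (-0.182391:ℝ), (-0.069185:ℝ), (0.000000:ℝ), (-0.094346:ℝ), (-0.006301:ℝ), (0.000000:ℝ), (-0.044064:ℝ), (0.000000:ℝ), (0.000000:ℝ), (-0.019108:ℝ), (0.000000:ℝ), (0.000000:ℝ), (-0.007782:ℝ), (0.000000:ℝ), (0.000000:ℝ), (-0.002997:ℝ), (0.000000:ℝ), (0.000000:ℝ)]).getD j 0) j ≤ ((fun j => (((A j).count 1 : ℕ) : ℝ) - (2*β - β^2) * ((A j).length : ℝ)) j) ∧ (fun j => ([(-0.295598:ℝ), (0.000000:ℝ), (-0.182391:ℝ), (-0.069185:ℝ),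 (0.000000:ℝ), (-0.094346:ℝ), (-0.006301:ℝ), (0.000000:ℝ), (-0.044064:ℝ), (0.000000:ℝ), (0.000000:ℝ), (-0.019108:ℝ), (0.000000:ℝ), (0.000000:ℝ), (-0.007782:ℝ), (0.000000:ℝ), (0.000000:ℝ), (-0.002997:ℝ), (0.000000:ℝ), (0.000000:ℝ)]).getD j 0) j ≤ 0 := by
    intro j hj
    interval_cases j
    · simp only []
      exact ⟨by rw [TL0, C1_0]; simp only [List.getD_cons_zero, List.getD_cons_succ]; push_cast; linarith, by norm_num [List.getD_cons_zero, List.getD_cons_succ], by rw [TL0, C1_0]; simp only [List.getD_cons_zero, List.getD_cons_succ]; push_cast; linarith, by norm_num [List.getD_cons_zero, List.getD_cons_succ]⟩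
    · simp only []
      exact ⟨by rw [TL1, C1_1]; simp only [List.getD_cons_zero, List.getD_cons_succ]; push_cast; linarith, by norm_num [List.getD_cons_zero, List.getD_cons_succ], by rw [TL1, C1_1]; simp only [List.getD_cons_zero, List.getD_cons_succ]; push_cast; linarith, by norm_num [List.getD_cons_zero, List.getD_cons_succ]⟩
    · simp only []
      exact ⟨by rw [TL2, C1_2]; simp only [List.getD_cons_zero, List.getD_cons_succ]; push_cast; linarith, by norm_num [List.getD_cons_zero, List.getD_cons_succ], by rw [TL2, C1_2]; simp only [List.getD_cons_zero, List.getD_cons_succ]; push_cast; linarith, by norm_num [List.getD_cons_zero, List.getD_cons_succ]⟩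
    · simp only []
      exact ⟨by rw [TL3, C1_3]; simp only [List.getD_cons_zero, List.getD_cons_succ]; push_cast; linarith, by norm_num [List.getD_cons_zero, List.getD_cons_succ], by rw [TL3, C1_3]; simp only [List.getD_cons_zero, List.getD_cons_succ]; push_cast; linarith, by norm_num [List.getD_cons_zero, List.getD_cons_succ]⟩
    · simp only []
      exact ⟨by rw [TL4, C1_4]; simp only [List.getD_cons_zero, List.getD_cons_succ]; push_cast; linarith, by norm_num [List.getD_cons_zero, List.getD_cons_succ], by rw [TL4, C1_4]; simp only [List.getD_cons_zero, List.getD_cons_succ]; push_cast; linarith, by norm_num [List.getD_cons_zero, List.getD_cons_succ]⟩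
    · simp only []
      exact ⟨by rw [TL5, C1_5]; simp only [List.getD_cons_zero, List.getD_cons_succ]; push_cast; linarith, by norm_num [List.getD_cons_zero, List.getD_cons_succ], by rw [TL5, C1_5]; simp only [List.getD_cons_zero, List.getD_cons_succ]; push_cast; linarith, by norm_num [List.getD_cons_zero, List.getD_cons_succ]⟩
    · simp only []
      exact ⟨by rw [TL6, C1_6]; simp only [List.getD_cons_zero, List.getD_cons_succ]; push_cast; linarith, by norm_num [List.getD_cons_zero, List.getD_cons_succ], by rw [TL6, C1_6]; simp only [List.getD_cons_zero, List.getD_cons_succ]; push_cast; linarith, by norm_num [List.getD_cons_zero, List.getD_cons_succ]⟩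
    · simp only []
      exact ⟨by rw [TL7, C1_7]; simp only [List.getD_cons_zero, List.getD_cons_succ]; push_cast; linarith, by norm_num [List.getD_cons_zero, List.getD_cons_succ], by rw [TL7, C1_7]; simp only [List.getD_cons_zero, List.getD_cons_succ]; push_cast; linarith, by norm_num [List.getD_cons_zero, List.getD_cons_succ]⟩
    · simp only []
      exact ⟨by rw [TL8, C1_8]; simp only [List.getD_cons_zero, List.getD_cons_succ]; push_cast; linarith, by norm_num [List.getD_cons_zero, List.getD_cons_succ], by rw [TL8, C1_8]; simp only [List.getD_cons_zero, List.getD_cons_succ]; push_cast; linarith, by norm_num [List.getD_cons_zero, List.getD_cons_succ]⟩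
    · simp only []
      exact ⟨by rw [TL9, C1_9]; simp only [List.getD_cons_zero, List.getD_cons_succ]; push_cast; linarith, by norm_num [List.getD_cons_zero, List.getD_cons_succ], by rw [TL9, C1_9]; simp only [List.getD_cons_zero, List.getD_cons_succ]; push_cast; linarith, by norm_num [List.getD_cons_zero, List.getD_cons_succ]⟩
    · simp only []
      exact ⟨by rw [TL10, C1_10]; simp only [List.getD_cons_zero, List.getD_cons_succ]; push_cast; linarith, by norm_num [List.getD_cons_zero, List.getD_cons_succ], by rw [TL10, C1_10]; simp only [List.getD_cons_zero, List.getD_cons_succ]; push_cast; linarith, by norm_num [List.getD_cons_zero, List.getD_cons_succ]⟩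
    · simp only []
      exact ⟨by rw [TL11, C1_11]; simp only [List.getD_cons_zero, List.getD_cons_succ]; push_cast; linarith, by norm_num [List.getD_cons_zero, List.getD_cons_succ], by rw [TL11, C1_11]; simp only [List.getD_cons_zero, List.getD_cons_succ]; push_cast; linarith, by norm_num [List.getD_cons_zero, List.getD_cons_succ]⟩
    · simp only []
      exact ⟨by rw [TL12, C1_12]; simp only [List.getD_cons_zero, List.getD_cons_succ]; push_cast; linarith, by norm_num [List.getD_cons_zero, List.getD_cons_succ], by rw [TL12, C1_12]; simp only [List.getD_cons_zero, List.getD_cons_succ]; push_cast; linarith, by norm_num [List.getD_cons_zero, List.getD_cons_succ]⟩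
    · simp only []
      exact ⟨by rw [TL13, C1_13]; simp only [List.getD_cons_zero, List.getD_cons_succ]; push_cast; linarith, by norm_num [List.getD_cons_zero, List.getD_cons_succ], by rw [TL13, C1_13]; simp only [List.getD_cons_zero, List.getD_cons_succ]; push_cast; linarith, by norm_num [List.getD_cons_zero, List.getD_cons_succ]⟩
    · simp only []
      exact ⟨by rw [TL14, C1_14]; simp only [List.getD_cons_zero, List.getD_cons_succ]; push_cast; linarith, by norm_num [List.getD_cons_zero, List.getD_cons_succ], by rw [TL14, C1_14]; simp only [List.getD_cons_zero, List.getD_cons_succ]; push_cast; linarith, by norm_num [List.getD_cons_zero, List.getD_cons_succ]⟩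
    · simp only []
      exact ⟨by rw [TL15, C1_15]; simp only [List.getD_cons_zero, List.getD_cons_succ]; push_cast; linarith, by norm_num [List.getD_cons_zero, List.getD_cons_succ], by rw [TL15, C1_15]; simp only [List.getD_cons_zero, List.getD_cons_succ]; push_cast; linarith, by norm_num [List.getD_cons_zero, List.getD_cons_succ]⟩
    · simp only []
      exact ⟨by rw [TL16, C1_16]; simp only [List.getD_cons_zero, List.getD_cons_succ]; push_cast; linarith, by norm_num [List.getD_cons_zero, List.getD_cons_succ], by rw [TL16, C1_16]; simp only [List.getD_cons_zero, List.getD_cons_succ]; push_cast; linarith, by norm_num [List.getD_cons_zero, List.getD_cons_succ]⟩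
    · simp only []
      exact ⟨by rw [TL17, C1_17]; simp only [List.getD_cons_zero, List.getD_cons_succ]; push_cast; linarith, by norm_num [List.getD_cons_zero, List.getD_cons_succ], by rw [TL17, C1_17]; simp only [List.getD_cons_zero, List.getD_cons_succ]; push_cast; linarith, by norm_num [List.getD_cons_zero, List.getD_cons_succ]⟩
    · simp only []
      exact ⟨by rw [TL18, C1_18]; simp only [List.getD_cons_zero, List.getD_cons_succ]; push_cast; linarith, by norm_num [List.getD_cons_zero, List.getD_cons_succ], by rw [TL18, C1_18]; simp only [List.getD_cons_zero, List.getD_cons_succ]; push_cast; linarith, by norm_num [List.getD_cons_zero, List.getD_cons_succ]⟩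
    · simp only []
      exact ⟨by rw [TL19, C1_19]; simp only [List.getD_cons_zero, List.getD_cons_succ]; push_cast; linarith, by norm_num [List.getD_cons_zero, List.getD_cons_succ], by rw [TL19, C1_19]; simp only [List.getD_cons_zero, List.getD_cons_succ]; push_cast; linarith, by norm_num [List.getD_cons_zero, List.getD_cons_succ]⟩
  have hE := engine β hb3 hb1 hb2 (fun j => (((A j).count 1 : ℕ) : ℝ) - (2*β - β^2) * ((A j).length : ℝ)) hrec
    (fun j => ([(0.000000:ℝ), (0.408805:ℝ), (0.000000:ℝ), (0.000000:ℝ), (0.157230:ℝ), (0.000000:ℝ), (0.000000:ℝ), (0.056583:ℝ), (0.000000:ℝ), (0.006219:ℝ), (0.018739:ℝ), (0.000000:ℝ), (0.005850:ℝ), (0.005482:ℝ), (0.000000:ℝ), (0.003556:ℝ), (0.001261:ℝ), (0.000000:ℝ), (0.001856:ℝ), (0.000156:ℝ)]).getD j 0) (fun j => ([(-0.295598:ℝ), (0.000000:ℝ), (-0.182391:ℝ), (-0.069185:ℝ), (0.000000:ℝ), (-0.094346:ℝ), (-0.006301:ℝ), (0.000000:ℝ), (-0.044064:ℝ), (0.000000:ℝ),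 (0.000000:ℝ), (-0.019108:ℝ), (0.000000:ℝ), (0.000000:ℝ), (-0.007782:ℝ), (0.000000:ℝ), (0.000000:ℝ), (-0.002997:ℝ), (0.000000:ℝ), (0.000000:ℝ)]).getD j 0) hu (0.001174:ℝ) (by norm_num) h20 h21
  intro F
  obtain ⟨h1, h2⟩ := hE F
  have hsu : (∑ j ∈ Finset.range 20, (fun j => ([(0.000000:ℝ), (0.408805:ℝ), (0.000000:ℝ), (0.000000:ℝ), (0.157230:ℝ), (0.000000:ℝ), (0.000000:ℝ), (0.056583:ℝ), (0.000000:ℝ), (0.006219:ℝ), (0.018739:ℝ), (0.000000:ℝ), (0.005850:ℝ), (0.005482:ℝ), (0.000000:ℝ), (0.003556:ℝ), (0.001261:ℝ), (0.000000:ℝ), (0.001856:ℝ), (0.000156:ℝ)]).getD j 0) j) = (0.665737:ℝ) := by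
    simp only [Finset.sum_range_succ, Finset.sum_range_zero, List.getD_cons_zero, List.getD_cons_succ]
    norm_num
  have hsl : (∑ j ∈ Finset.range 20, (fun j => ([(-0.295598:ℝ), (0.000000:ℝ), (-0.182391:ℝ), (-0.069185:ℝ), (0.000000:ℝ), (-0.094346:ℝ), (-0.006301:ℝ), (0.000000:ℝ), (-0.044064:ℝ), (0.000000:ℝ), (0.000000:ℝ), (-0.019108:ℝ), (0.000000:ℝ), (0.000000:ℝ), (-0.007782:ℝ), (0.000000:ℝ), (0.000000:ℝ), (-0.002997:ℝ), (0.000000:ℝ), (0.000000:ℝ)]).getD j 0) j) = -(0.721772:ℝ) := by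
    simp only [Finset.sum_range_succ, Finset.sum_range_zero, List.getD_cons_zero, List.getD_cons_succ]
    norm_num
  rw [hsu] at h1
  rw [hsl] at h2
  constructor
  · refine le_trans h1 ?_
    norm_num
  · refine le_trans ?_ h2
    norm_num

lemma letter2 (β : ℝ) (hb3 : β^3 = β^2 + β + 1) (hb1 : (1.839:ℝ) ≤ β) (hb2 : β ≤ 1.8393)
    (hd1 : (1.8392867552141611:ℝ) ≤ β) (hd2 : β ≤ 1.8392867552141612) :
    ∀ F : Finset ℕ,
      (∑ j ∈ F, ((((A j).count 2 : ℕ) : ℝ) - (2 - β) * ((A j).length : ℝ))) ≤ 0.597951 ∧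
      -(0.856567:ℝ) ≤ ∑ j ∈ F, ((((A j).count 2 : ℕ) : ℝ) - (2 - β) * ((A j).length : ℝ)) := by
  have hprod : (0:ℝ) ≤ (β - 1.8392867552141611) * (1.8392867552141612 - β) :=
    mul_nonneg (by linarith) (by linarith)
  have hθlo : (0.160713244:ℝ) ≤ (2 - β) := by
    nlinarith [hprod, sq_nonneg (β - 1.8392867552141611), sq_nonneg (β - 1.8392867552141612)]
  have hθhi : (2 - β) ≤ (0.160713245:ℝ) := by
    nlinarith [hprod, sq_nonneg (β - 1.8392867552141611), sq_nonneg (β - 1.8392867552141612)]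
  have hadd : ∀ k, (((A (k+3)).count 2 : ℕ) : ℝ) - (2 - β) * ((A (k+3)).length : ℝ) =
      ((((A (k+2)).count 2 : ℕ) : ℝ) - (2 - β) * ((A (k+2)).length : ℝ)) +
      ((((A (k+1)).count 2 : ℕ) : ℝ) - (2 - β) * ((A (k+1)).length : ℝ)) +
      ((((A k).count 2 : ℕ) : ℝ) - (2 - β) * ((A k).length : ℝ)) := by
    intro k
    have h1 := lenA_rec k
    have h2 := cntA_rec 2 k
    rw [h1, h2]
    push_cast
    ring
  have hrec : ∀ k, ((fun j => (((A j).count 2 : ℕ) : ℝ) - (2 - β) * ((A j).length : ℝ)) k) + (β^2 - β) * ((fun j => (((A j).count 2 : ℕ) : ℝ) - (2 - β) * ((A j).length : ℝ)) (k+1)) + β * ((fun j => (((A j).count 2 : ℕ) : ℝ) - (2 - β) * ((A j).length : ℝ)) (k+2)) = 0 := by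
    intro k
    induction k with
    | zero =>
      simp only []
      rw [TL0, TL1, TL2, C2_0, C2_1, C2_2]
      push_cast
      linear_combination (2:ℝ) * hb3
    | succ k ih =>
      simp only [] at ih ⊢
      have h3 := hadd k
      have e1 : k + 1 + 2 = k + 3 := by omega
      rw [e1, h3]
      linear_combination β * ih - ((((A (k+1)).count 2 : ℕ) : ℝ) - (2 - β) * ((A (k+1)).length : ℝ)) * hb3
  have h20 : |(fun j => (((A j).count 2 : ℕ) : ℝ) - (2 - β) * ((A j).length : ℝ)) 20| ≤ (0.001105:ℝ) := by
    simp only []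
    rw [TL20, C2_20, abs_le]
    constructor <;> push_cast <;> nlinarith [hθlo, hθhi]
  have h21 : |(fun j => (((A j).count 2 : ℕ) : ℝ) - (2 - β) * ((A j).length : ℝ)) 21| ≤ (0.001105:ℝ) := by
    simp only []
    rw [TL21, C2_21, abs_le]
    constructor <;> push_cast <;> nlinarith [hθlo, hθhi]
  have hu : ∀ j, j < 20 → ((fun j => (((A j).count 2 : ℕ) : ℝ) - (2 - β) * ((A j).length : ℝ)) j) ≤ (fun j => ([(0.000000:ℝ), (0.000000:ℝ), (0.357148:ℝ), (0.000000:ℝ), (0.000000:ℝ), (0.142883:ℝ), (0.000000:ℝ), (0.000000:ℝ), (0.053727:ℝ), (0.000000:ℝ), (0.000526:ℝ), (0.018823:ℝ), (0.000000:ℝ), (0.003267:ℝ), (0.006009:ℝ), (0.000000:ℝ), (0.002470:ℝ), (0.001673:ℝ), (0.000000:ℝ), (0.001480:ℝ)]).getD j 0) j ∧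
      0 ≤ (fun j => ([(0.000000:ℝ), (0.000000:ℝ), (0.357148:ℝ), (0.000000:ℝ), (0.000000:ℝ), (0.142883:ℝ), (0.000000:ℝ), (0.000000:ℝ), (0.053727:ℝ), (0.000000:ℝ), (0.000526:ℝ), (0.018823:ℝ), (0.000000:ℝ), (0.003267:ℝ), (0.006009:ℝ), (0.000000:ℝ), (0.002470:ℝ), (0.001673:ℝ), (0.000000:ℝ), (0.001480:ℝ)]).getD j 0) j ∧
      (fun j => ([(-0.160714:ℝ), (-0.321427:ℝ), (0.000000:ℝ), (-0.124993:ℝ), (-0.089273:ℝ), (0.000000:ℝ), (-0.071383:ℝ), (-0.017773:ℝ), (0.000000:ℝ), (-0.035430:ℝ), (0.000000:ℝ), (0.000000:ℝ), (-0.016083:ℝ), (0.000000:ℝ), (0.000000:ℝ), (-0.006817:ℝ), (0.000000:ℝ), (0.000000:ℝ), (-0.002729:ℝ), (0.000000:ℝ)]).getD j 0) j ≤ ((fun j => (((A j).count 2 : ℕ) : ℝ) - (2 - β) * ((A j).length : ℝ)) j) ∧ (fun j => ([(-0.160714:ℝ), (-0.321427:ℝ), (0.000000:ℝ), (-0.124993:ℝ),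 (-0.089273:ℝ), (0.000000:ℝ), (-0.071383:ℝ), (-0.017773:ℝ), (0.000000:ℝ), (-0.035430:ℝ), (0.000000:ℝ), (0.000000:ℝ), (-0.016083:ℝ), (0.000000:ℝ), (0.000000:ℝ), (-0.006817:ℝ), (0.000000:ℝ), (0.000000:ℝ), (-0.002729:ℝ), (0.000000:ℝ)]).getD j 0) j ≤ 0 := by
    intro j hj
    interval_cases j
    · simp only []
      exact ⟨by rw [TL0, C2_0]; simp only [List.getD_cons_zero, List.getD_cons_succ]; push_cast; linarith, by norm_num [List.getD_cons_zero, List.getD_cons_succ], by rw [TL0, C2_0]; simp only [List.getD_cons_zero, List.getD_cons_succ]; push_cast; linarith, by norm_num [List.getD_cons_zero, List.getD_cons_succ]⟩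
    · simp only []
      exact ⟨by rw [TL1, C2_1]; simp only [List.getD_cons_zero, List.getD_cons_succ]; push_cast; linarith, by norm_num [List.getD_cons_zero, List.getD_cons_succ], by rw [TL1, C2_1]; simp only [List.getD_cons_zero, List.getD_cons_succ]; push_cast; linarith, by norm_num [List.getD_cons_zero, List.getD_cons_succ]⟩
    · simp only []
      exact ⟨by rw [TL2, C2_2]; simp only [List.getD_cons_zero, List.getD_cons_succ]; push_cast; linarith, by norm_num [List.getD_cons_zero, List.getD_cons_succ], by rw [TL2, C2_2]; simp only [List.getD_cons_zero, List.getD_cons_succ]; push_cast; linarith, by norm_num [List.getD_cons_zero, List.getD_cons_succ]⟩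
    · simp only []
      exact ⟨by rw [TL3, C2_3]; simp only [List.getD_cons_zero, List.getD_cons_succ]; push_cast; linarith, by norm_num [List.getD_cons_zero, List.getD_cons_succ], by rw [TL3, C2_3]; simp only [List.getD_cons_zero, List.getD_cons_succ]; push_cast; linarith, by norm_num [List.getD_cons_zero, List.getD_cons_succ]⟩
    · simp only []
      exact ⟨by rw [TL4, C2_4]; simp only [List.getD_cons_zero, List.getD_cons_succ]; push_cast; linarith, by norm_num [List.getD_cons_zero, List.getD_cons_succ], by rw [TL4, C2_4]; simp only [List.getD_cons_zero, List.getD_cons_succ]; push_cast; linarith, by norm_num [List.getD_cons_zero, List.getD_cons_succ]⟩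
    · simp only []
      exact ⟨by rw [TL5, C2_5]; simp only [List.getD_cons_zero, List.getD_cons_succ]; push_cast; linarith, by norm_num [List.getD_cons_zero, List.getD_cons_succ], by rw [TL5, C2_5]; simp only [List.getD_cons_zero, List.getD_cons_succ]; push_cast; linarith, by norm_num [List.getD_cons_zero, List.getD_cons_succ]⟩
    · simp only []
      exact ⟨by rw [TL6, C2_6]; simp only [List.getD_cons_zero, List.getD_cons_succ]; push_cast; linarith, by norm_num [List.getD_cons_zero, List.getD_cons_succ], by rw [TL6, C2_6]; simp only [List.getD_cons_zero, List.getD_cons_succ]; push_cast; linarith, by norm_num [List.getD_cons_zero, List.getD_cons_succ]⟩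
    · simp only []
      exact ⟨by rw [TL7, C2_7]; simp only [List.getD_cons_zero, List.getD_cons_succ]; push_cast; linarith, by norm_num [List.getD_cons_zero, List.getD_cons_succ], by rw [TL7, C2_7]; simp only [List.getD_cons_zero, List.getD_cons_succ]; push_cast; linarith, by norm_num [List.getD_cons_zero, List.getD_cons_succ]⟩
    · simp only []
      exact ⟨by rw [TL8, C2_8]; simp only [List.getD_cons_zero, List.getD_cons_succ]; push_cast; linarith, by norm_num [List.getD_cons_zero, List.getD_cons_succ], by rw [TL8, C2_8]; simp only [List.getD_cons_zero, List.getD_cons_succ]; push_cast; linarith, by norm_num [List.getD_cons_zero, List.getD_cons_succ]⟩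
    · simp only []
      exact ⟨by rw [TL9, C2_9]; simp only [List.getD_cons_zero, List.getD_cons_succ]; push_cast; linarith, by norm_num [List.getD_cons_zero, List.getD_cons_succ], by rw [TL9, C2_9]; simp only [List.getD_cons_zero, List.getD_cons_succ]; push_cast; linarith, by norm_num [List.getD_cons_zero, List.getD_cons_succ]⟩
    · simp only []
      exact ⟨by rw [TL10, C2_10]; simp only [List.getD_cons_zero, List.getD_cons_succ]; push_cast; linarith, by norm_num [List.getD_cons_zero, List.getD_cons_succ], by rw [TL10, C2_10]; simp only [List.getD_cons_zero, List.getD_cons_succ]; push_cast; linarith, by norm_num [List.getD_cons_zero, List.getD_cons_succ]⟩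
    · simp only []
      exact ⟨by rw [TL11, C2_11]; simp only [List.getD_cons_zero, List.getD_cons_succ]; push_cast; linarith, by norm_num [List.getD_cons_zero, List.getD_cons_succ], by rw [TL11, C2_11]; simp only [List.getD_cons_zero, List.getD_cons_succ]; push_cast; linarith, by norm_num [List.getD_cons_zero, List.getD_cons_succ]⟩
    · simp only []
      exact ⟨by rw [TL12, C2_12]; simp only [List.getD_cons_zero, List.getD_cons_succ]; push_cast; linarith, by norm_num [List.getD_cons_zero, List.getD_cons_succ], by rw [TL12, C2_12]; simp only [List.getD_cons_zero, List.getD_cons_succ]; push_cast; linarith, by norm_num [List.getD_cons_zero, List.getD_cons_succ]⟩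
    · simp only []
      exact ⟨by rw [TL13, C2_13]; simp only [List.getD_cons_zero, List.getD_cons_succ]; push_cast; linarith, by norm_num [List.getD_cons_zero, List.getD_cons_succ], by rw [TL13, C2_13]; simp only [List.getD_cons_zero, List.getD_cons_succ]; push_cast; linarith, by norm_num [List.getD_cons_zero, List.getD_cons_succ]⟩
    · simp only []
      exact ⟨by rw [TL14, C2_14]; simp only [List.getD_cons_zero, List.getD_cons_succ]; push_cast; linarith, by norm_num [List.getD_cons_zero, List.getD_cons_succ], by rw [TL14, C2_14]; simp only [List.getD_cons_zero, List.getD_cons_succ]; push_cast; linarith, by norm_num [List.getD_cons_zero, List.getD_cons_succ]⟩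
    · simp only []
      exact ⟨by rw [TL15, C2_15]; simp only [List.getD_cons_zero, List.getD_cons_succ]; push_cast; linarith, by norm_num [List.getD_cons_zero, List.getD_cons_succ], by rw [TL15, C2_15]; simp only [List.getD_cons_zero, List.getD_cons_succ]; push_cast; linarith, by norm_num [List.getD_cons_zero, List.getD_cons_succ]⟩
    · simp only []
      exact ⟨by rw [TL16, C2_16]; simp only [List.getD_cons_zero, List.getD_cons_succ]; push_cast; linarith, by norm_num [List.getD_cons_zero, List.getD_cons_succ], by rw [TL16, C2_16]; simp only [List.getD_cons_zero, List.getD_cons_succ]; push_cast; linarith, by norm_num [List.getD_cons_zero, List.getD_cons_succ]⟩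
    · simp only []
      exact ⟨by rw [TL17, C2_17]; simp only [List.getD_cons_zero, List.getD_cons_succ]; push_cast; linarith, by norm_num [List.getD_cons_zero, List.getD_cons_succ], by rw [TL17, C2_17]; simp only [List.getD_cons_zero, List.getD_cons_succ]; push_cast; linarith, by norm_num [List.getD_cons_zero, List.getD_cons_succ]⟩
    · simp only []
      exact ⟨by rw [TL18, C2_18]; simp only [List.getD_cons_zero, List.getD_cons_succ]; push_cast; linarith, by norm_num [List.getD_cons_zero, List.getD_cons_succ], by rw [TL18, C2_18]; simp only [List.getD_cons_zero, List.getD_cons_succ]; push_cast; linarith, by norm_num [List.getD_cons_zero, List.getD_cons_succ]⟩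
    · simp only []
      exact ⟨by rw [TL19, C2_19]; simp only [List.getD_cons_zero, List.getD_cons_succ]; push_cast; linarith, by norm_num [List.getD_cons_zero, List.getD_cons_succ], by rw [TL19, C2_19]; simp only [List.getD_cons_zero, List.getD_cons_succ]; push_cast; linarith, by norm_num [List.getD_cons_zero, List.getD_cons_succ]⟩
  have hE := engine β hb3 hb1 hb2 (fun j => (((A j).count 2 : ℕ) : ℝ) - (2 - β) * ((A j).length : ℝ)) hrec
    (fun j => ([(0.000000:ℝ), (0.000000:ℝ), (0.357148:ℝ), (0.000000:ℝ), (0.000000:ℝ), (0.142883:ℝ), (0.000000:ℝ), (0.000000:ℝ), (0.053727:ℝ), (0.000000:ℝ), (0.000526:ℝ), (0.018823:ℝ), (0.000000:ℝ), (0.003267:ℝ), (0.006009:ℝ), (0.000000:ℝ), (0.002470:ℝ), (0.001673:ℝ), (0.000000:ℝ), (0.001480:ℝ)]).getD j 0) (fun j => ([(-0.160714:ℝ), (-0.321427:ℝ), (0.000000:ℝ), (-0.124993:ℝ), (-0.089273:ℝ), (0.000000:ℝ), (-0.071383:ℝ), (-0.017773:ℝ), (0.000000:ℝ), (-0.035430:ℝ),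 (0.000000:ℝ), (0.000000:ℝ), (-0.016083:ℝ), (0.000000:ℝ), (0.000000:ℝ), (-0.006817:ℝ), (0.000000:ℝ), (0.000000:ℝ), (-0.002729:ℝ), (0.000000:ℝ)]).getD j 0) hu (0.001105:ℝ) (by norm_num) h20 h21
  intro F
  obtain ⟨h1, h2⟩ := hE F
  have hsu : (∑ j ∈ Finset.range 20, (fun j => ([(0.000000:ℝ), (0.000000:ℝ), (0.357148:ℝ), (0.000000:ℝ), (0.000000:ℝ), (0.142883:ℝ), (0.000000:ℝ), (0.000000:ℝ), (0.053727:ℝ), (0.000000:ℝ), (0.000526:ℝ), (0.018823:ℝ), (0.000000:ℝ), (0.003267:ℝ), (0.006009:ℝ), (0.000000:ℝ), (0.002470:ℝ), (0.001673:ℝ), (0.000000:ℝ), (0.001480:ℝ)]).getD j 0) j) = (0.588006:ℝ) := by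
    simp only [Finset.sum_range_succ, Finset.sum_range_zero, List.getD_cons_zero, List.getD_cons_succ]
    norm_num
  have hsl : (∑ j ∈ Finset.range 20, (fun j => ([(-0.160714:ℝ), (-0.321427:ℝ), (0.000000:ℝ), (-0.124993:ℝ), (-0.089273:ℝ), (0.000000:ℝ), (-0.071383:ℝ), (-0.017773:ℝ), (0.000000:ℝ), (-0.035430:ℝ), (0.000000:ℝ), (0.000000:ℝ), (-0.016083:ℝ), (0.000000:ℝ), (0.000000:ℝ), (-0.006817:ℝ), (0.000000:ℝ), (0.000000:ℝ), (-0.002729:ℝ), (0.000000:ℝ)]).getD j 0) j) = -(0.846622:ℝ) := by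
    simp only [Finset.sum_range_succ, Finset.sum_range_zero, List.getD_cons_zero, List.getD_cons_succ]
    norm_num
  rw [hsu] at h1
  rw [hsl] at h2
  constructor
  · refine le_trans h1 ?_
    norm_num
  · refine le_trans ?_ h2
    norm_num

lemma count_flatten (L : List ℕ) (a : Fin 3) :
    ((L.map A).flatten).count a = (L.map (fun j => (A j).count a)).sum := by
  induction L with
  | nil => simp
  | cons x xs ih => simp [List.count_append, ih]

lemma len_flatten (L : List ℕ) :
    ((L.map A).flatten).length = (L.map (fun j => (A j).length)).sum := by
  induction L with
  | nil => simp
  | cons x xs ih => simp [ih]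

lemma E_bound (a : Fin 3) : ∃ θ P N : ℝ, 0 ≤ P ∧ 0 ≤ N ∧ P + N ≤ 1.49 ∧
    ∀ n : ℕ, ((Pref n).count a : ℝ) - θ * n ≤ P ∧ -N ≤ ((Pref n).count a : ℝ) - θ * n := by
  obtain ⟨β, hb3, ⟨hb1, hb2⟩, hd1, hd2⟩ := exists_beta
  have main : ∀ (θ P N : ℝ),
      (∀ F : Finset ℕ, (∑ j ∈ F, (((A j).count a : ℝ) - θ * ((A j).length : ℝ))) ≤ P ∧
        -N ≤ ∑ j ∈ F, (((A j).count a : ℝ) - θ * ((A j).length : ℝ))) →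
      ∀ n : ℕ, ((Pref n).count a : ℝ) - θ * n ≤ P ∧ -N ≤ ((Pref n).count a : ℝ) - θ * n := by
    intro θ P N hF n
    obtain ⟨L, hpw, hle, hflat⟩ := decomp n
    have hnodup : L.Nodup := hpw.imp (fun h => ne_of_gt h)
    have hcntN : (Pref n).count a = ∑ j ∈ L.toFinset, (A j).count a := by
      rw [hflat, count_flatten, ← List.sum_toFinset _ hnodup]
    have hlenN : n = ∑ j ∈ L.toFinset, (A j).length := by
      have h0 : (Pref n).length = n := by simp [Pref]
      rw [← h0, hflat, len_flatten, ← List.sum_toFinset _ hnodup]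
    have hkey : ((Pref n).count a : ℝ) - θ * n =
        ∑ j ∈ L.toFinset, (((A j).count a : ℝ) - θ * ((A j).length : ℝ)) := by
      rw [Finset.sum_sub_distrib, ← Finset.mul_sum]
      rw [hcntN, hlenN]
      push_cast
      ring
    rw [hkey]
    exact hF L.toFinset
  fin_cases a
  · exact ⟨β^2 - β - 1, 0.783427, 0.468510, by norm_num, by norm_num, by norm_num,
      main _ _ _ (letter0 β hb3 hb1 hb2 hd1 hd2)⟩
  · exact ⟨2*β - β^2, 0.676303, 0.732338, by norm_num, by norm_num, by norm_num,
      main _ _ _ (letter1 β hb3 hb1 hb2 hd1 hd2)⟩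
  · exact ⟨2 - β, 0.597951, 0.856567, by norm_num, by norm_num, by norm_num,
      main _ _ _ (letter2 β hb3 hb1 hb2 hd1 hd2)⟩

lemma Pref_add (i m : ℕ) : Pref (i + m) = Pref i ++ (List.range m).map (fun t => trib (i + t)) := by
  simp only [Pref, List.range_add, List.map_append, List.map_map]
  rfl

end TB

theorem tribonacci_two_balanced :
    ∀ U V : List (Fin 3), IsFactor U → IsFactor V → U.length = V.length →
      ∀ a : Fin 3, |(U.count a : ℤ) - (V.count a : ℤ)| ≤ 2 := by
  intro U V hU hV hlen a
  obtain ⟨i, hUeq⟩ := hU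
  obtain ⟨j, hVeq⟩ := hV
  obtain ⟨θ, P, N, hP0, hN0, hPN, hE⟩ := TB.E_bound a
  set n := U.length with hn
  have hUcnt : (U.count a : ℝ) = ((TB.Pref (i+n)).count a : ℝ) - ((TB.Pref i).count a : ℝ) := by
    have h1 : TB.Pref (i+n) = TB.Pref i ++ U := by
      rw [TB.Pref_add i n, ← hUeq]
    rw [h1, List.count_append]
    push_cast
    ring
  have hVcnt : (V.count a : ℝ) = ((TB.Pref (j+n)).count a : ℝ) - ((TB.Pref j).count a : ℝ) := by
    have h1 : TB.Pref (j+n) = TB.Pref j ++ V := by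
      rw [hlen, TB.Pref_add j V.length, ← hVeq]
    rw [h1, List.count_append]
    push_cast
    ring
  obtain ⟨e1u, e1l⟩ := hE (i+n)
  obtain ⟨e2u, e2l⟩ := hE i
  obtain ⟨e3u, e3l⟩ := hE (j+n)
  obtain ⟨e4u, e4l⟩ := hE j
  have hcast : ∀ m : ℕ, ((i+m : ℕ) : ℝ) = (i:ℝ) + m := by intro m; push_cast; ring
  have hreal : |((U.count a : ℤ) - (V.count a : ℤ) : ℝ)| ≤ 2.98 := by
    rw [abs_le]
    push_cast at e1u e1l e3u e3l ⊢
    constructor <;> nlinarith [e1u, e1l, e2u, e2l, e3u, e3l, e4u, e4l]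
  by_contra hcon
  push_neg at hcon
  have h3 : (3:ℤ) ≤ |(U.count a : ℤ) - (V.count a : ℤ)| := by omega
  have h4 : (3:ℝ) ≤ ((|(U.count a : ℤ) - (V.count a : ℤ)| : ℤ) : ℝ) := by
    exact_mod_cast h3
  push_cast at h4 hreal
  linarith
end

section
/- For the Tribonacci word t, the Parikh-vector discrepancy for letter 0 satisfies -0.6 < |t₀t₁⋯t_{N-1}|₀ - N/β < 0.9 for all N ≥ 1, where β is the real root of x³ - x² - x - 1. -/
def W (k : ℕ) : List (Fin 3) := tau^[k] [0]

lemma W_succ (k : ℕ) : W (k + 1) = tau (W k) := Function.iterate_succ_apply' _ _ _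

lemma W_head (k : ℕ) : ∃ w, W k = 0 :: w := by
  induction k with
  | zero => exact ⟨[], rfl⟩
  | succ k ih =>
    obtain ⟨w, hw⟩ := ih
    exact ⟨1 :: tau w, by rw [W_succ, hw]; rfl⟩

lemma count01_pos (k : ℕ) : 1 ≤ (W k).count 0 := by
  obtain ⟨w, hw⟩ := W_head k
  rw [hw]; simp [List.count_cons]

lemma length_tau (w : List (Fin 3)) : (tau w).length = w.length + w.count 0 + w.count 1 := by
  induction w with
  | nil => rfl
  | cons a t ih =>
    rw [show tau (a :: t) = tau [a] ++ tau t by simp [tau], List.length_append, ih,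
      List.count_cons, List.count_cons]
    fin_cases a <;> simp [tau] <;> omega

lemma length_W (k : ℕ) : k + 1 ≤ (W k).length := by
  induction k with
  | zero => simp [W]
  | succ k ih =>
    have h2 := count01_pos k
    rw [W_succ, length_tau]
    omega

lemma W_prefix_succ (k : ℕ) : W k <+: W (k + 1) := by
  induction k with
  | zero => exact ⟨[1], rfl⟩
  | succ k ih =>
    rw [W_succ, W_succ]
    exact tau_prefix ih

lemma W_prefix {j k : ℕ} (h : j ≤ k) : W j <+: W k := by
  induction k with
  | zero => simp_all
  | succ k ih =>
    rcases Nat.lt_or_ge j (k+1) with h' | h'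
    · exact (ih (by omega)).trans (W_prefix_succ k)
    · have : j = k + 1 := by omega
      subst this; rfl

lemma getD_of_prefix {u v : List (Fin 3)} (h : u <+: v) {n : ℕ} (hn : n < u.length) :
    u.getD n 0 = v.getD n 0 := by
  obtain ⟨t, rfl⟩ := h
  rw [List.getD_eq_getElem?_getD, List.getD_eq_getElem?_getD, List.getElem?_append_left hn]

lemma trib_eq_s11 {k n : ℕ} (hn : n < (W k).length) : trib n = (W k).getD n 0 := by
  have h1 : n < (W (n + 1)).length := by have := length_W (n + 1); omega
  rcases Nat.le_total (n + 1) k with h | h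
  · exact getD_of_prefix (W_prefix h) h1
  · exact (getD_of_prefix (W_prefix h) hn).symm

def P (N : ℕ) : List (Fin 3) := (List.range N).map trib

lemma P_succ (N : ℕ) : P (N + 1) = P N ++ [trib N] := by
  simp [P, List.range_succ]

lemma P_length (N : ℕ) : (P N).length = N := by simp [P]

lemma P_eq_take {N k : ℕ} (h : N ≤ (W k).length) : P N = (W k).take N := by
  apply List.ext_getElem
  · simp [P]; omega
  · intro i h1 h2
    simp only [P, List.getElem_map, List.getElem_range, List.getElem_take]
    have hi : i < N := by simpa [P] using h1
    have : trib i = (W k).getD i 0 := trib_eq_s11 (by omega)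
    rw [this, List.getD_eq_getElem?_getD, List.getElem?_eq_getElem (by omega)]
    rfl

lemma count0_tau (w : List (Fin 3)) : (tau w).count 0 = w.length := by
  induction w with
  | nil => rfl
  | cons a t ih =>
    rw [show tau (a :: t) = tau [a] ++ tau t by simp [tau], List.count_append, ih]
    fin_cases a <;> simp [tau] <;> omega

lemma count1_tau (w : List (Fin 3)) : (tau w).count 1 = w.count 0 := by
  induction w with
  | nil => rfl
  | cons a t ih =>
    rw [show tau (a :: t) = tau [a] ++ tau t by simp [tau], List.count_append, ih,
      List.count_cons]
    fin_cases a <;> simp [tau] <;> omega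

/-- The desubstitution length function. -/
def Lf (M : ℕ) : ℕ := M + (P M).count 0 + (P M).count 1

lemma P_Lf (M : ℕ) : P (Lf M) = tau (P M) := by
  have hM : M ≤ (W M).length := by have := length_W M; omega
  have hPM : P M = (W M).take M := P_eq_take hM
  have hdec : W (M + 1) = tau (P M) ++ tau ((W M).drop M) := by
    rw [W_succ, hPM, ← tau_append, List.take_append_drop]
  have hlen : (tau (P M)).length = Lf M := by
    rw [length_tau, P_length]; rfl
  have hle : Lf M ≤ (W (M + 1)).length := by
    rw [hdec, List.length_append, hlen]; omega
  rw [P_eq_take hle, hdec, ← hlen, List.take_left]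

lemma trib_Lf (M : ℕ) : trib (Lf M) = 0 := by
  have hM : M < (W M).length := by have := length_W M; omega
  have hPM : P M = (W M).take M := P_eq_take (le_of_lt hM)
  set a := (W M)[M]'hM with ha
  have hw : (W M).drop M = a :: (W M).drop (M + 1) := List.drop_eq_getElem_cons hM
  have hdec : W (M + 1) = tau (P M) ++ (tau [a] ++ tau ((W M).drop (M + 1))) := by
    rw [W_succ, hPM, ← tau_append, ← tau_append]
    rw [show [a] ++ (W M).drop (M+1) = (W M).drop M from hw.symm ▸ rfl, List.take_append_drop]
  have hlen : (tau (P M)).length = Lf M := by rw [length_tau, P_length]; rfl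
  have htau_a : ∀ b : Fin 3, ∃ w', tau [b] = 0 :: w' := by
    intro b; fin_cases b <;> exact ⟨_, rfl⟩
  obtain ⟨w', hw'⟩ := htau_a a
  have hLf : Lf M < (W (M + 1)).length := by
    rw [hdec, List.length_append, hlen, hw']
    simp
  rw [trib_eq_s11 hLf, hdec, List.getD_eq_getElem?_getD, List.getElem?_append_right (by omega),
    hlen, Nat.sub_self, hw']
  simp

lemma count0_P_Lf (M : ℕ) : (P (Lf M)).count 0 = M := by
  rw [P_Lf, count0_tau, P_length]

lemma count1_P_Lf (M : ℕ) : (P (Lf M)).count 1 = (P M).count 0 := by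
  rw [P_Lf, count1_tau]

lemma P_Lf_succ (M : ℕ) : P (Lf M + 1) = P (Lf M) ++ [0] := by
  rw [P_succ, trib_Lf]

lemma Lf_zero : Lf 0 = 0 := rfl

lemma Lf_succ_bounds (M : ℕ) : Lf M + 1 ≤ Lf (M + 1) ∧ Lf (M + 1) ≤ Lf M + 2 := by
  have h0 : ∀ t : Fin 3, List.count 0 [t] + List.count 1 [t] ≤ 1 := by decide
  have h := h0 (trib M)
  unfold Lf
  rw [P_succ, List.count_append, List.count_append]
  omega

lemma trib_zero : trib 0 = 0 := rfl

lemma count0_P_pos {M : ℕ} (h : 1 ≤ M) : 1 ≤ (P M).count 0 := by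
  have : (0 : Fin 3) ∈ P M := by
    rw [← trib_zero]
    exact List.mem_map_of_mem (f := trib) (List.mem_range.mpr h)
  exact List.count_pos_iff.mpr this

lemma decomp (N : ℕ) : ∃ M r, r ≤ 1 ∧ N = Lf M + r := by
  induction N with
  | zero => exact ⟨0, 0, by omega, by simp [Lf_zero]⟩
  | succ N ih =>
    obtain ⟨M, r, hr, hN⟩ := ih
    rcases Nat.eq_zero_or_pos r with h | h
    · exact ⟨M, 1, le_refl 1, by omega⟩
    · have hr1 : r = 1 := by omega
      obtain ⟨h1, h2⟩ := Lf_succ_bounds M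
      have hcase : Lf (M+1) = Lf M + 1 ∨ Lf (M+1) = Lf M + 2 := by omega
      rcases hcase with h' | h'
      · exact ⟨M + 1, 1, le_refl 1, by omega⟩
      · exact ⟨M + 1, 0, by omega, by omega⟩

lemma decomp' {N : ℕ} (h : 1 ≤ N) : ∃ M r, r ≤ 1 ∧ N = Lf M + r ∧ M < N := by
  obtain ⟨M, r, hr, hN⟩ := decomp N
  refine ⟨M, r, hr, hN, ?_⟩
  rcases Nat.eq_zero_or_pos M with h0 | h0
  · subst h0; rw [Lf_zero] at hN; omega
  · have := count0_P_pos h0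
    unfold Lf at hN
    omega

def Reg (x y : ℝ) : Prop :=
  -0.532 ≤ x ∧ x ≤ 0.848 ∧ -0.841 ≤ y ∧ y ≤ 0.784 ∧
  -0.712 ≤ x + y ∧ x + y ≤ 0.971 ∧ -1.093 ≤ x - y ∧ x - y ≤ 1.465

lemma beta_bounds (β : ℝ) (hβ : β ^ 3 - β ^ 2 - β - 1 = 0) :
    (1.8392867 : ℝ) < β ∧ β < 1.8392868 := by
  constructor
  · nlinarith [sq_nonneg (β - 1.8392867), sq_nonneg (β + 1), sq_nonneg β, sq_nonneg (2*β + 0.8392867)]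
  · nlinarith [sq_nonneg (β - 1.8392868), sq_nonneg (β + 1), sq_nonneg β, sq_nonneg (2*β + 0.8392868)]

lemma uv_bounds (β : ℝ) (hb1 : (1.8392867 : ℝ) < β) (hb2 : β < 1.8392868) :
    (0.5436889 : ℝ) < 1/β ∧ 1/β < 0.5436891 ∧
    (0.2955977 : ℝ) < 1/β^2 ∧ 1/β^2 < 0.2955978 := by
  have hb0 : (0 : ℝ) < β := by linarith
  have h2 : (0:ℝ) < β^2 := by positivity
  refine ⟨?_, ?_, ?_, ?_⟩
  · rw [lt_div_iff₀ hb0]; nlinarith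
  · rw [div_lt_iff₀ hb0]; nlinarith
  · rw [lt_div_iff₀ h2]; nlinarith
  · rw [div_lt_iff₀ h2]; nlinarith


set_option maxHeartbeats 2000000 in
lemma step_reg (u v x y r : ℝ) (hu1 : (0.5436889:ℝ) < u) (hu2 : u < 0.5436891)
    (hv1 : (0.2955977:ℝ) < v) (hv2 : v < 0.2955978) (hr : r = 0 ∨ r = 1) (h : Reg x y) :
    Reg (r*(1-u) - (x+y)*u) (x*(1-v) - y*v - r*v) := by
  obtain ⟨h1, h2, h3, h4, h5, h6, h7, h8⟩ := h
  rcases hr with rfl | rfl <;>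
    refine ⟨?_, ?_, ?_, ?_, ?_, ?_, ?_, ?_⟩
  · nlinarith [mul_nonneg (by linarith : (0:ℝ) ≤ u) (by linarith : (0:ℝ) ≤ 0.971 - (x + y))]
  · nlinarith [mul_nonneg (by linarith : (0:ℝ) ≤ u) (by linarith : (0:ℝ) ≤ x + y + 0.712)]
  · nlinarith [mul_nonneg (by linarith : (0:ℝ) ≤ 1 - 2*v) (by linarith : (0:ℝ) ≤ x + 0.532), mul_nonneg (by linarith : (0:ℝ) ≤ v) (by linarith : (0:ℝ) ≤ 1.093 - (y - x))]
  · nlinarith [mul_nonneg (by linarith : (0:ℝ) ≤ 1 - 2*v) (by linarith : (0:ℝ) ≤ 0.848 - x), mul_nonneg (by linarith : (0:ℝ) ≤ v) (by linarith : (0:ℝ) ≤ 1.465 - (x - y))]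
  · nlinarith [mul_nonneg (by linarith : (0:ℝ) ≤ 2*u + 2*v - 1) (by linarith : (0:ℝ) ≤ 0.784 - y), mul_nonneg (by linarith : (0:ℝ) ≤ 1 - u - v) (by linarith : (0:ℝ) ≤ 1.093 - (y - x))]
  · nlinarith [mul_nonneg (by linarith : (0:ℝ) ≤ 2*u + 2*v - 1) (by linarith : (0:ℝ) ≤ y + 0.841), mul_nonneg (by linarith : (0:ℝ) ≤ 1 - u - v) (by linarith : (0:ℝ) ≤ 1.465 - (x - y))]
  · nlinarith [mul_nonneg (by linarith : (0:ℝ) ≤ u - v) (by linarith : (0:ℝ) ≤ 0.971 - (x + y))]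
  · nlinarith [mul_nonneg (by linarith : (0:ℝ) ≤ u - v) (by linarith : (0:ℝ) ≤ x + y + 0.712)]
  · nlinarith [mul_nonneg (by linarith : (0:ℝ) ≤ u) (by linarith : (0:ℝ) ≤ 0.971 - (x + y))]
  · nlinarith [mul_nonneg (by linarith : (0:ℝ) ≤ u) (by linarith : (0:ℝ) ≤ x + y + 0.712)]
  · nlinarith [mul_nonneg (by linarith : (0:ℝ) ≤ 1 - 2*v) (by linarith : (0:ℝ) ≤ x + 0.532), mul_nonneg (by linarith : (0:ℝ) ≤ v) (by linarith : (0:ℝ) ≤ 1.093 - (y - x))]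
  · nlinarith [mul_nonneg (by linarith : (0:ℝ) ≤ 1 - 2*v) (by linarith : (0:ℝ) ≤ 0.848 - x), mul_nonneg (by linarith : (0:ℝ) ≤ v) (by linarith : (0:ℝ) ≤ 1.465 - (x - y))]
  · nlinarith [mul_nonneg (by linarith : (0:ℝ) ≤ 2*u + 2*v - 1) (by linarith : (0:ℝ) ≤ 0.784 - y), mul_nonneg (by linarith : (0:ℝ) ≤ 1 - u - v) (by linarith : (0:ℝ) ≤ 1.093 - (y - x))]
  · nlinarith [mul_nonneg (by linarith : (0:ℝ) ≤ 2*u + 2*v - 1) (by linarith : (0:ℝ) ≤ y + 0.841), mul_nonneg (by linarith : (0:ℝ) ≤ 1 - u - v) (by linarith : (0:ℝ) ≤ 1.465 - (x - y))]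
  · nlinarith [mul_nonneg (by linarith : (0:ℝ) ≤ u - v) (by linarith : (0:ℝ) ≤ 0.971 - (x + y))]
  · nlinarith [mul_nonneg (by linarith : (0:ℝ) ≤ u - v) (by linarith : (0:ℝ) ≤ x + y + 0.712)]

lemma reg_all (β : ℝ) (hβ : β ^ 3 - β ^ 2 - β - 1 = 0) :
    ∀ N : ℕ, Reg (((P N).count 0 : ℝ) - N / β) (((P N).count 1 : ℝ) - N / β ^ 2) := by
  obtain ⟨hb1, hb2⟩ := beta_bounds β hβ
  obtain ⟨hu1, hu2, hv1, hv2⟩ := uv_bounds β hb1 hb2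
  have hb0 : (0 : ℝ) < β := by linarith
  have hbne : β ≠ 0 := ne_of_gt hb0
  intro N
  induction N using Nat.strong_induction_on with
  | _ N ih =>
    rcases Nat.eq_zero_or_pos N with rfl | hN
    · simp [P, Reg]; norm_num
    · obtain ⟨M, r, hr, hNe, hMN⟩ := decomp' hN
      have hReg := ih M hMN
      set a : ℝ := ((P M).count 0 : ℝ) with ha
      set b : ℝ := ((P M).count 1 : ℝ) with hb
      have hc0 : ((P N).count 0 : ℝ) = M + r := by
        interval_cases r
        · rw [hNe]; simp [count0_P_Lf]
        · rw [hNe, P_Lf_succ, List.count_append, count0_P_Lf]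
          push_cast; simp
      have hc1 : ((P N).count 1 : ℝ) = a := by
        interval_cases r
        · rw [hNe]; simp [count1_P_Lf, ha]
        · rw [hNe, P_Lf_succ, List.count_append, count1_P_Lf]
          simp [ha]
      have hNr : (N : ℝ) = M + a + b + r := by
        rw [hNe]; unfold Lf; push_cast [ha, hb]; ring
      have hrr : (r : ℝ) = 0 ∨ (r : ℝ) = 1 := by
        interval_cases r <;> simp
      have key := step_reg (1/β) (1/β^2) (a - M/β) (b - M/β^2) (r : ℝ)
        hu1 hu2 hv1 hv2 hrr hReg
      have e1 : ((P N).count 0 : ℝ) - N / β =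
          (r : ℝ) * (1 - 1/β) - ((a - M/β) + (b - M/β^2)) * (1/β) := by
        rw [hc0, hNr]
        field_simp
        ring_nf
        linear_combination (M : ℝ) * hβ
      have e2 : ((P N).count 1 : ℝ) - N / β ^ 2 =
          (a - M/β) * (1 - 1/β^2) - (b - M/β^2) * (1/β^2) - (r : ℝ) * (1/β^2) := by
        rw [hc1, hNr]
        field_simp
        ring_nf
        linear_combination (M : ℝ) * hβ
      rw [e1, e2]
      exact key

theorem tribonacci_letter0_discrepancy (β : ℝ) (hβ : β ^ 3 - β ^ 2 - β - 1 = 0) :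
    ∀ N : ℕ, 1 ≤ N →
      -0.6 < ((((List.range N).map trib).count 0 : ℝ) - N / β) ∧
        ((((List.range N).map trib).count 0 : ℝ) - N / β) < 0.9 := by
  intro N _
  have h := reg_all β hβ N
  obtain ⟨h1, h2, -⟩ := h
  constructor
  · calc (-0.6 : ℝ) < -0.532 := by norm_num
      _ ≤ _ := h1
  · calc ((((List.range N).map trib).count 0 : ℝ) - N / β) ≤ 0.848 := h2
      _ < 0.9 := by norm_num
end
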